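/- arXiv:2101.01833 — 4 statements merged into one kernel-verified Lean document; each statement's English description precedes it below -/
import Mathlib

section
/- Let d ≥ 1 be an integer, let γ₁,…,γ_d, b, β be complex numbers with b ≠ 0 and β ≠ 0, and let A ∈ ℂ satisfy 1 + b·exp(β·A) = 0. Let U ⊆ ℂ^d be an open neighborhood of 0 and let ψ : ℂ^d → ℂ be analytic on U with ψ(0) = A, such that 1 + b·exp(β·ψ(a)) + Σ_{i=1}^d a_i·exp(γ_i·ψ(a)) = 0 for all a = (a₁,…,a_d) ∈ U. Set φ(a) = exp(ψ(a)), so φ(0) = α := exp(A) and φ(a) is a zero of the complex-exponent polynomial f(z) = 1 + b z^β + Σ_{i=1}^d a_i z^{γ_i}, the powers being taken on the sheet determined by ψ. Then for every multi-index n = (n₁,…,n_d) of non-negative integers with N := n₁+⋯+n_d ≥ 1, the iterated partial derivative (∂/∂a₁)^{n₁}⋯(∂/∂a_d)^{n_d} φ evaluated at a = 0 equals −( exp(A·(1 + Σ_{i=1}^d n_i(γ_i − 1))) / (b·β·exp(A·(β−1)))^{N} ) · ∏_{i=1}^{N−1} ( −1 + i·β − Σ_{j=1}^d n_j γ_j ).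 -/
/-- The partial derivative of `f : (Fin d → ℂ) → ℂ` in the `i`-th coordinate direction. -/
noncomputable def pd {d : ℕ} (i : Fin d) (f : (Fin d → ℂ) → ℂ) : (Fin d → ℂ) → ℂ :=
  fun x => fderiv ℂ f x (Pi.single i 1)

/-- The iterated partial derivative `(∂/∂a₁)^{n₁} ⋯ (∂/∂a_d)^{n_d} f`. -/
noncomputable def iterPD {d : ℕ} (n : Fin d → ℕ) (f : (Fin d → ℂ) → ℂ) : (Fin d → ℂ) → ℂ :=
  (List.finRange d).foldr (fun i g => (pd i)^[n i] g) f

namespace Stmt0Aux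

open Complex Finset

variable {d : ℕ} {U : Set (Fin d → ℂ)}

/-- list-indexed iterated partial derivative -/
noncomputable def F (l : List (Fin d)) (n : Fin d → ℕ) (f : (Fin d → ℂ) → ℂ) : (Fin d → ℂ) → ℂ :=
  l.foldr (fun i g => (pd i)^[n i] g) f

lemma iterPD_eq_F (n : Fin d → ℕ) (f : (Fin d → ℂ) → ℂ) :
    iterPD n f = F (List.finRange d) n f := rfl

lemma pd_congr (hU : IsOpen U) {f g : (Fin d → ℂ) → ℂ} (h : Set.EqOn f g U) (i : Fin d) :
    Set.EqOn (pd i f) (pd i g) U := by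
  intro x hx
  have hev : f =ᶠ[nhds x] g := Filter.eventuallyEq_of_mem (hU.mem_nhds hx) h
  simp only [pd, hev.fderiv_eq]

lemma pd_iter_congr (hU : IsOpen U) {f g : (Fin d → ℂ) → ℂ} (h : Set.EqOn f g U) (i : Fin d)
    (r : ℕ) : Set.EqOn ((pd i)^[r] f) ((pd i)^[r] g) U := by
  induction r with
  | zero => simpa using h
  | succ r ih =>
    rw [Function.iterate_succ_apply', Function.iterate_succ_apply']
    exact pd_congr hU ih i

lemma F_congr (hU : IsOpen U) {f g : (Fin d → ℂ) → ℂ} (h : Set.EqOn f g U)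
    (l : List (Fin d)) (n : Fin d → ℕ) : Set.EqOn (F l n f) (F l n g) U := by
  induction l with
  | nil => simpa [F] using h
  | cons a t ih => exact pd_iter_congr hU ih a (n a)

lemma analyticOnNhd_pd (hU : IsOpen U) {f : (Fin d → ℂ) → ℂ}
    (hf : AnalyticOnNhd ℂ f U) (i : Fin d) : AnalyticOnNhd ℂ (pd i f) U := by
  have h1 : AnalyticOnNhd ℂ (fderiv ℂ f) U := hf.fderiv
  exact (ContinuousLinearMap.apply ℂ ℂ (Pi.single i 1 : Fin d → ℂ)).comp_analyticOnNhd h1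

lemma analyticOnNhd_pd_iter (hU : IsOpen U) {f : (Fin d → ℂ) → ℂ}
    (hf : AnalyticOnNhd ℂ f U) (i : Fin d) (r : ℕ) : AnalyticOnNhd ℂ ((pd i)^[r] f) U := by
  induction r with
  | zero => simpa using hf
  | succ r ih =>
    rw [Function.iterate_succ_apply']
    exact analyticOnNhd_pd hU ih i

lemma analyticOnNhd_F (hU : IsOpen U) {f : (Fin d → ℂ) → ℂ}
    (hf : AnalyticOnNhd ℂ f U) (l : List (Fin d)) (n : Fin d → ℕ) :
    AnalyticOnNhd ℂ (F l n f) U := by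
  induction l with
  | nil => simpa [F] using hf
  | cons a t ih => exact analyticOnNhd_pd_iter hU ih a (n a)

lemma F_counts_congr {n m : Fin d → ℕ} {l : List (Fin d)} (h : ∀ k ∈ l, n k = m k)
    (f : (Fin d → ℂ) → ℂ) : F l n f = F l m f := by
  induction l with
  | nil => rfl
  | cons a t ih =>
    show (pd a)^[n a] (F t n f) = (pd a)^[m a] (F t m f)
    rw [h a (List.mem_cons_self (a := a) (l := t)), ih (fun k hk => h k (List.mem_cons_of_mem a hk))]

lemma F_zero {n : Fin d → ℕ} {l : List (Fin d)} (h : ∀ k ∈ l, n k = 0)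
    (f : (Fin d → ℂ) → ℂ) : F l n f = f := by
  induction l with
  | nil => rfl
  | cons a t ih =>
    show (pd a)^[n a] (F t n f) = f
    rw [h a (List.mem_cons_self (a := a) (l := t)), ih (fun k hk => h k (List.mem_cons_of_mem a hk))]
    rfl

lemma F_peel {n : Fin d → ℕ} {i : Fin d} {l : List (Fin d)} (hl : l.Pairwise (· < ·))
    (hi : i ∈ l) (htop : ∀ k ∈ l, i < k → n k = 0) (hn : 1 ≤ n i)
    (f : (Fin d → ℂ) → ℂ) :
    F l n f = F l (Function.update n i (n i - 1)) (pd i f) := by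
  induction l with
  | nil => simp at hi
  | cons a t ih =>
    rcases List.mem_cons.mp hi with rfl | hit
    · have ht0 : ∀ k ∈ t, n k = 0 := fun k hk =>
        htop k (List.mem_cons_of_mem i hk) ((List.pairwise_cons.mp hl).1 k hk)
      have ht0' : ∀ k ∈ t, Function.update n i (n i - 1) k = 0 := fun k hk => by
        rw [Function.update_of_ne (ne_of_gt ((List.pairwise_cons.mp hl).1 k hk))]
        exact ht0 k hk
      show (pd i)^[n i] (F t n f) = (pd i)^[Function.update n i (n i - 1) i]
        (F t (Function.update n i (n i - 1)) (pd i f))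
      rw [F_zero ht0, F_zero ht0', Function.update_self]
      conv_lhs => rw [show n i = (n i - 1) + 1 by omega]
      rw [Function.iterate_succ_apply]
    · have ha : a < i := by
        have := (List.pairwise_cons.mp hl).1 i hit; exact this
      show (pd a)^[n a] (F t n f) = (pd a)^[Function.update n i (n i - 1) a]
        (F t (Function.update n i (n i - 1)) (pd i f))
      rw [Function.update_of_ne (ne_of_lt ha),
        ih (List.pairwise_cons.mp hl).2 hit
          (fun k hk hik => htop k (List.mem_cons_of_mem a hk) hik)]

lemma iterPD_peel {n : Fin d → ℕ} {i : Fin d} (htop : ∀ k, i < k → n k = 0) (hn : 1 ≤ n i)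
    (f : (Fin d → ℂ) → ℂ) :
    iterPD n f = iterPD (Function.update n i (n i - 1)) (pd i f) :=
  F_peel (List.pairwise_lt_finRange d) (List.mem_finRange i)
    (fun k _ => htop k) hn f



lemma diffAt {f : (Fin d → ℂ) → ℂ} (hf : AnalyticOnNhd ℂ f U) {x} (hx : x ∈ U) :
    DifferentiableAt ℂ f x := (hf x hx).differentiableAt

lemma diffAt_coord (j : Fin d) (x : Fin d → ℂ) :
    DifferentiableAt ℂ (fun y : Fin d → ℂ => y j) x :=
  (ContinuousLinearMap.proj j : (Fin d → ℂ) →L[ℂ] ℂ).differentiableAt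

lemma fderiv_coord_apply (j i : Fin d) (x : Fin d → ℂ) :
    fderiv ℂ (fun y : Fin d → ℂ => y j) x (Pi.single i 1) = if j = i then 1 else 0 := by
  have : fderiv ℂ (fun y : Fin d → ℂ => y j) x = ContinuousLinearMap.proj j :=
    (ContinuousLinearMap.proj j : (Fin d → ℂ) →L[ℂ] ℂ).fderiv
  rw [this]
  simp [ContinuousLinearMap.proj_apply, Pi.single_apply]

lemma pd_add (hU : IsOpen U) {f g : (Fin d → ℂ) → ℂ} (hf : AnalyticOnNhd ℂ f U)
    (hg : AnalyticOnNhd ℂ g U) (i : Fin d) :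
    Set.EqOn (pd i (fun x => f x + g x)) (fun x => pd i f x + pd i g x) U := by
  intro x hx
  simp only [pd, fderiv_fun_add (diffAt hf hx) (diffAt hg hx), ContinuousLinearMap.add_apply]

lemma pd_const_mul (hU : IsOpen U) {f : (Fin d → ℂ) → ℂ} (hf : AnalyticOnNhd ℂ f U)
    (c : ℂ) (i : Fin d) :
    Set.EqOn (pd i (fun x => c * f x)) (fun x => c * pd i f x) U := by
  intro x hx
  simp only [pd, fderiv_const_mul (diffAt hf hx) c, ContinuousLinearMap.coe_smul',
    Pi.smul_apply, smul_eq_mul]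

lemma pd_coordmul_self (hU : IsOpen U) {f : (Fin d → ℂ) → ℂ} (hf : AnalyticOnNhd ℂ f U)
    (j : Fin d) :
    Set.EqOn (pd j (fun x => x j * f x)) (fun x => f x + x j * pd j f x) U := by
  intro x hx
  simp only [pd, fderiv_fun_mul (diffAt_coord j x) (diffAt hf hx), ContinuousLinearMap.add_apply,
    ContinuousLinearMap.coe_smul', Pi.smul_apply, smul_eq_mul, fderiv_coord_apply, if_pos rfl, if_true]
  ring

lemma pd_coordmul_other (hU : IsOpen U) {f : (Fin d → ℂ) → ℂ} (hf : AnalyticOnNhd ℂ f U)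
    {j k : Fin d} (hkj : k ≠ j) :
    Set.EqOn (pd k (fun x => x j * f x)) (fun x => x j * pd k f x) U := by
  intro x hx
  simp only [pd, fderiv_fun_mul (diffAt_coord j x) (diffAt hf hx), ContinuousLinearMap.add_apply,
    ContinuousLinearMap.coe_smul', Pi.smul_apply, smul_eq_mul, fderiv_coord_apply,
    if_neg hkj.symm]
  ring



open Complex Finset
variable {d : ℕ} {U : Set (Fin d → ℂ)}

lemma analyticOnNhd_coord (j : Fin d) :
    AnalyticOnNhd ℂ (fun y : Fin d → ℂ => y j) U := by
  intro x _
  exact (ContinuousLinearMap.proj j : (Fin d → ℂ) →L[ℂ] ℂ).analyticAt x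

lemma analyticOnNhd_coordmul {f : (Fin d → ℂ) → ℂ} (hf : AnalyticOnNhd ℂ f U) (j : Fin d) :
    AnalyticOnNhd ℂ (fun x => x j * f x) U :=
  (analyticOnNhd_coord j).mul hf

lemma pd_iter_add (hU : IsOpen U) {f g : (Fin d → ℂ) → ℂ} (hf : AnalyticOnNhd ℂ f U)
    (hg : AnalyticOnNhd ℂ g U) (i : Fin d) (r : ℕ) :
    Set.EqOn ((pd i)^[r] (fun x => f x + g x)) (fun x => (pd i)^[r] f x + (pd i)^[r] g x) U := by
  induction r with
  | zero => simp [Set.EqOn]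
  | succ r ih =>
    rw [Function.iterate_succ_apply', Function.iterate_succ_apply', Function.iterate_succ_apply']
    exact (pd_congr hU ih i).trans
      (pd_add hU (analyticOnNhd_pd_iter hU hf i r) (analyticOnNhd_pd_iter hU hg i r) i)

lemma pd_iter_const_mul (hU : IsOpen U) {f : (Fin d → ℂ) → ℂ} (hf : AnalyticOnNhd ℂ f U)
    (c : ℂ) (i : Fin d) (r : ℕ) :
    Set.EqOn ((pd i)^[r] (fun x => c * f x)) (fun x => c * (pd i)^[r] f x) U := by
  induction r with
  | zero => simp [Set.EqOn]
  | succ r ih =>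
    rw [Function.iterate_succ_apply', Function.iterate_succ_apply']
    exact (pd_congr hU ih i).trans (pd_const_mul hU (analyticOnNhd_pd_iter hU hf i r) c i)

lemma pd_iter_coordmul_other (hU : IsOpen U) {f : (Fin d → ℂ) → ℂ}
    (hf : AnalyticOnNhd ℂ f U) {j k : Fin d} (hkj : k ≠ j) (r : ℕ) :
    Set.EqOn ((pd k)^[r] (fun x => x j * f x)) (fun x => x j * (pd k)^[r] f x) U := by
  induction r with
  | zero => simp [Set.EqOn]
  | succ r ih =>
    rw [Function.iterate_succ_apply', Function.iterate_succ_apply']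
    exact (pd_congr hU ih k).trans
      (pd_coordmul_other hU (analyticOnNhd_pd_iter hU hf k r) hkj)

lemma pd_iter_coordmul_self (hU : IsOpen U) {f : (Fin d → ℂ) → ℂ}
    (hf : AnalyticOnNhd ℂ f U) (j : Fin d) (r : ℕ) :
    Set.EqOn ((pd j)^[r] (fun x => x j * f x))
      (fun x => x j * (pd j)^[r] f x + (r : ℂ) * (pd j)^[r - 1] f x) U := by
  induction r with
  | zero => simp [Set.EqOn]
  | succ r ih =>
    rw [Function.iterate_succ_apply']
    have h1 := pd_congr hU ih j
    have hFr := analyticOnNhd_pd_iter hU hf j r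
    have hFr1 := analyticOnNhd_pd_iter hU hf j (r - 1)
    have h2 : Set.EqOn (pd j (fun x => x j * (pd j)^[r] f x + (r : ℂ) * (pd j)^[r - 1] f x))
        (fun x => (pd j (fun x => x j * (pd j)^[r] f x)) x
          + (pd j (fun x => (r : ℂ) * (pd j)^[r - 1] f x)) x) U :=
      pd_add hU (analyticOnNhd_coordmul hFr j) (analyticOnNhd_const.mul hFr1) j
    have h3 := pd_coordmul_self hU hFr j
    have h4 := pd_const_mul hU hFr1 (r : ℂ) j
    intro x hx
    have e1 := h1 hx; have e2 := h2 hx; have e3 := h3 hx; have e4 := h4 hx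
    rw [e1, e2]
    simp only [e3, e4]
    have hr : (r : ℂ) * pd j ((pd j)^[r - 1] f) x = (r : ℂ) * (pd j)^[r] f x := by
      rcases Nat.eq_zero_or_pos r with h | h
      · simp [h]
      · congr 2
        conv_rhs => rw [show r = (r - 1) + 1 by omega]
        rw [Function.iterate_succ_apply']
    rw [hr]
    have : pd j ((pd j)^[r] f) = (pd j)^[r + 1] f := (Function.iterate_succ_apply' (pd j) r f).symm
    rw [this]
    push_cast
    ring_nf


lemma F_add (hU : IsOpen U) {f g : (Fin d → ℂ) → ℂ} (hf : AnalyticOnNhd ℂ f U)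
    (hg : AnalyticOnNhd ℂ g U) (l : List (Fin d)) (n : Fin d → ℕ) :
    Set.EqOn (F l n (fun x => f x + g x)) (fun x => F l n f x + F l n g x) U := by
  induction l with
  | nil => simp [F, Set.EqOn]
  | cons a t ih =>
    show Set.EqOn ((pd a)^[n a] (F t n fun x => f x + g x)) _ U
    exact (pd_iter_congr hU ih a (n a)).trans
      (pd_iter_add hU (analyticOnNhd_F hU hf t n) (analyticOnNhd_F hU hg t n) a (n a))

lemma F_const_mul (hU : IsOpen U) {f : (Fin d → ℂ) → ℂ} (hf : AnalyticOnNhd ℂ f U)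
    (c : ℂ) (l : List (Fin d)) (n : Fin d → ℕ) :
    Set.EqOn (F l n (fun x => c * f x)) (fun x => c * F l n f x) U := by
  induction l with
  | nil => simp [F, Set.EqOn]
  | cons a t ih =>
    show Set.EqOn ((pd a)^[n a] (F t n fun x => c * f x)) _ U
    exact (pd_iter_congr hU ih a (n a)).trans
      (pd_iter_const_mul hU (analyticOnNhd_F hU hf t n) c a (n a))

lemma F_coordmul (hU : IsOpen U) {h : (Fin d → ℂ) → ℂ} (hh : AnalyticOnNhd ℂ h U)
    (j : Fin d) {l : List (Fin d)} (hl : l.Pairwise (· < ·)) (n : Fin d → ℕ) :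
    Set.EqOn (F l n (fun x => x j * h x))
      (fun x => x j * F l n h x
        + (if j ∈ l then (n j : ℂ) else 0) * F l (Function.update n j (n j - 1)) h x) U := by
  induction l with
  | nil => simp [F, Set.EqOn]
  | cons a t ih =>
    have hlt := (List.pairwise_cons.mp hl).2
    have hat := (List.pairwise_cons.mp hl).1
    rcases eq_or_ne a j with rfl | haj
    · -- a = j; j ∉ t
      have hjt : a ∉ t := fun hmem => lt_irrefl a (hat a hmem)
      have ih' : Set.EqOn (F t n (fun x => x a * h x)) (fun x => x a * F t n h x) U := by
        intro x hx
        have := ih hlt hx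
        simp only [if_neg hjt] at this
        simpa using this
      show Set.EqOn ((pd a)^[n a] (F t n fun x => x a * h x)) _ U
      have step1 := pd_iter_congr hU ih' a (n a)
      have step2 := pd_iter_coordmul_self hU (analyticOnNhd_F hU hh t n) a (n a)
      refine (step1.trans step2).trans ?_
      intro x hx
      simp only [if_pos (List.mem_cons_self (a := a) (l := t))]
      have e1 : F (a :: t) n h = (pd a)^[n a] (F t n h) := rfl
      have e2 : F (a :: t) (Function.update n a (n a - 1)) h
          = (pd a)^[n a - 1] (F t n h) := by
        show (pd a)^[Function.update n a (n a - 1) a]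
          (F t (Function.update n a (n a - 1)) h) = _
        rw [Function.update_self,
          F_counts_congr (fun k hk => (Function.update_of_ne
            (fun hkj : k = a => hjt (by rw [← hkj]; exact hk)) _ n)) h]
      rw [e1, e2]
    · -- a ≠ j
      have hmemiff : (j ∈ a :: t) = (j ∈ t) := by
        simp [List.mem_cons, (Ne.symm haj)]
      show Set.EqOn ((pd a)^[n a] (F t n fun x => x j * h x)) _ U
      have step1 := pd_iter_congr hU (ih hlt) a (n a)
      set c : ℂ := if j ∈ t then (n j : ℂ) else 0 with hc
      have hF1 := analyticOnNhd_F hU hh t n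
      have hF2 := analyticOnNhd_F hU hh t (Function.update n j (n j - 1))
      have step2 := pd_iter_add (f := fun x => x j * F t n h x)
        (g := fun x => c * F t (Function.update n j (n j - 1)) h x) hU
        (analyticOnNhd_coordmul hF1 j) (analyticOnNhd_const.mul hF2) a (n a)
      have step3 := pd_iter_coordmul_other hU hF1 haj (n a)
      have step4 := pd_iter_const_mul hU hF2 c a (n a)
      intro x hx
      rw [step1 hx, step2 hx]
      simp only [step3 hx, step4 hx]
      have e1 : F (a :: t) n h = (pd a)^[n a] (F t n h) := rfl
      have e2 : F (a :: t) (Function.update n j (n j - 1)) h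
          = (pd a)^[n a] (F t (Function.update n j (n j - 1)) h) := by
        show (pd a)^[Function.update n j (n j - 1) a] _ = _
        rw [Function.update_of_ne haj]
        rfl
      rw [e1, e2]
      simp only [hmemiff, ← hc]

lemma pd_zero_fun (i : Fin d) : pd i (fun _ : Fin d → ℂ => (0 : ℂ)) = fun _ => 0 := by
  funext x
  simp [pd]

lemma F_zero_fun (l : List (Fin d)) (n : Fin d → ℕ) :
    F l n (fun _ : Fin d → ℂ => (0 : ℂ)) = fun _ => 0 := by
  have hit : ∀ (i : Fin d) (r : ℕ), (pd i)^[r] (fun _ : Fin d → ℂ => (0:ℂ)) = fun _ => 0 := by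
    intro i r
    induction r with
    | zero => rfl
    | succ r ih => rw [Function.iterate_succ_apply', ih, pd_zero_fun]
  induction l with
  | nil => rfl
  | cons a t ih =>
    show (pd a)^[n a] (F t n _) = _
    rw [ih, hit]

lemma analyticOnNhd_finsum {ι : Type*} {h : ι → (Fin d → ℂ) → ℂ} (s : Finset ι)
    (hh : ∀ j ∈ s, AnalyticOnNhd ℂ (h j) U) :
    AnalyticOnNhd ℂ (fun x => ∑ j ∈ s, h j x) U := by
  classical
  induction s using Finset.induction_on with
  | empty => simpa using (analyticOnNhd_const (v := (0:ℂ)))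
  | @insert a s has ih =>
    have : (fun x => ∑ j ∈ insert a s, h j x) = fun x => h a x + ∑ j ∈ s, h j x := by
      funext x; rw [Finset.sum_insert has]
    rw [this]
    exact (hh a (Finset.mem_insert_self a s)).add
      (ih fun j hj => hh j (Finset.mem_insert_of_mem hj))

lemma J_congr (hU : IsOpen U) (hU0 : (0 : Fin d → ℂ) ∈ U) {f g : (Fin d → ℂ) → ℂ} (h : Set.EqOn f g U) (n : Fin d → ℕ) :
    iterPD n f 0 = iterPD n g 0 := by
  rw [iterPD_eq_F, iterPD_eq_F]
  exact F_congr hU h _ n hU0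

lemma J_add (hU : IsOpen U) (hU0 : (0 : Fin d → ℂ) ∈ U) {f g : (Fin d → ℂ) → ℂ} (hf : AnalyticOnNhd ℂ f U) (hg : AnalyticOnNhd ℂ g U)
    (n : Fin d → ℕ) :
    iterPD n (fun x => f x + g x) 0 = iterPD n f 0 + iterPD n g 0 := by
  rw [iterPD_eq_F, iterPD_eq_F, iterPD_eq_F]
  exact F_add hU hf hg _ n hU0

lemma J_const_mul (hU : IsOpen U) (hU0 : (0 : Fin d → ℂ) ∈ U) {f : (Fin d → ℂ) → ℂ} (hf : AnalyticOnNhd ℂ f U) (c : ℂ) (n : Fin d → ℕ) :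
    iterPD n (fun x => c * f x) 0 = c * iterPD n f 0 := by
  rw [iterPD_eq_F, iterPD_eq_F]
  exact F_const_mul hU hf c _ n hU0

lemma J_coordmul (hU : IsOpen U) (hU0 : (0 : Fin d → ℂ) ∈ U) {h : (Fin d → ℂ) → ℂ} (hh : AnalyticOnNhd ℂ h U) (j : Fin d)
    (n : Fin d → ℕ) :
    iterPD n (fun x => x j * h x) 0
      = (n j : ℂ) * iterPD (Function.update n j (n j - 1)) h 0 := by
  rw [iterPD_eq_F, iterPD_eq_F]
  have h2 := F_coordmul hU hh j (List.pairwise_lt_finRange d) n hU0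
  simp only [Pi.zero_apply, zero_mul, zero_add, List.mem_finRange, if_true] at h2
  exact h2

lemma J_sum (hU : IsOpen U) (hU0 : (0 : Fin d → ℂ) ∈ U) {ι : Type*} {h : ι → (Fin d → ℂ) → ℂ} (s : Finset ι)
    (hh : ∀ j ∈ s, AnalyticOnNhd ℂ (h j) U) (n : Fin d → ℕ) :
    iterPD n (fun x => ∑ j ∈ s, h j x) 0 = ∑ j ∈ s, iterPD n (h j) 0 := by
  classical
  induction s using Finset.induction_on with
  | empty =>
    have : (fun x : Fin d → ℂ => ∑ j ∈ (∅ : Finset ι), h j x) = fun _ => 0 := by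
      funext x; simp
    rw [this, iterPD_eq_F, F_zero_fun]
    simp
  | @insert a s has ih =>
    have he : (fun x => ∑ j ∈ insert a s, h j x) = fun x => h a x + ∑ j ∈ s, h j x := by
      funext x; rw [Finset.sum_insert has]
    rw [he, J_add hU hU0 (hh a (Finset.mem_insert_self a s))
        (analyticOnNhd_finsum s fun j hj => hh j (Finset.mem_insert_of_mem hj)) n,
      ih fun j hj => hh j (Finset.mem_insert_of_mem hj), Finset.sum_insert has]

lemma J_zero_counts {f : (Fin d → ℂ) → ℂ} {n : Fin d → ℕ} (h : ∀ k, n k = 0) :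
    iterPD n f 0 = f 0 := by
  rw [iterPD_eq_F, F_zero (fun k _ => h k)]

noncomputable def gfun (ψ : (Fin d → ℂ) → ℂ) (μ : ℂ) : (Fin d → ℂ) → ℂ :=
  fun a => Complex.exp (μ * ψ a)

noncomputable def PP (β A μ sc : ℂ) (N : ℕ) : ℂ :=
  if N = 0 then Complex.exp (μ * A)
  else μ * Complex.exp ((μ + sc) * A) * (β⁻¹) ^ N
    * ∏ k ∈ Finset.range (N - 1), (μ + sc - ((k : ℂ) + 1) * β)

noncomputable def PP0 (β A sc : ℂ) (N : ℕ) : ℂ :=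
  Complex.exp (sc * A) * (β⁻¹) ^ N * ∏ k ∈ Finset.range (N - 1), (sc - ((k : ℂ) + 1) * β)

noncomputable def Sg (γ : Fin d → ℂ) (n : Fin d → ℕ) : ℂ := ∑ j, (n j : ℂ) * γ j

section Setting

variable {γ : Fin d → ℂ} {b β A : ℂ} {ψ : (Fin d → ℂ) → ℂ}

lemma analyticOnNhd_gfun (hψa : AnalyticOnNhd ℂ ψ U) (μ : ℂ) :
    AnalyticOnNhd ℂ (gfun ψ μ) U :=
  (analyticOnNhd_const.mul hψa).cexp

lemma keyDeriv (hU : IsOpen U) (hψa : AnalyticOnNhd ℂ ψ U)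
    (heq : ∀ a ∈ U, 1 + b * Complex.exp (β * ψ a)
      + ∑ j, a j * Complex.exp (γ j * ψ a) = 0)
    {x : Fin d → ℂ} (hx : x ∈ U) (i : Fin d) :
    (b * β * Complex.exp (β * ψ x) + ∑ j, x j * (γ j * Complex.exp (γ j * ψ x)))
        * pd i ψ x + Complex.exp (γ i * ψ x) = 0 := by
  classical
  have hψd : HasFDerivAt ψ (fderiv ℂ ψ x) x := (diffAt hψa hx).hasFDerivAt
  set ψ' := fderiv ℂ ψ x with hψ'
  have hexp : HasFDerivAt (fun a => Complex.exp (β * ψ a))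
      (Complex.exp (β * ψ x) • (β • ψ')) x := (hψd.const_mul β).cexp
  have hterm : ∀ j : Fin d, HasFDerivAt (fun a : Fin d → ℂ => a j * Complex.exp (γ j * ψ a))
      (x j • (Complex.exp (γ j * ψ x) • (γ j • ψ'))
        + Complex.exp (γ j * ψ x) • (ContinuousLinearMap.proj j : (Fin d → ℂ) →L[ℂ] ℂ)) x := by
    intro j
    exact (ContinuousLinearMap.proj j : (Fin d → ℂ) →L[ℂ] ℂ).hasFDerivAt.mul
      ((hψd.const_mul (γ j)).cexp)
  have hsum := HasFDerivAt.fun_sum (u := Finset.univ) (fun j _ => hterm j)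
  have htotal := ((hexp.const_mul b).const_add 1).add hsum
  have hev : (fun a => 1 + b * Complex.exp (β * ψ a)
      + ∑ j, a j * Complex.exp (γ j * ψ a)) =ᶠ[nhds x] (fun _ => (0 : ℂ)) :=
    Filter.eventuallyEq_of_mem (hU.mem_nhds hx) (fun a ha => heq a ha)
  have hfz : fderiv ℂ (fun a => 1 + b * Complex.exp (β * ψ a)
      + ∑ j, a j * Complex.exp (γ j * ψ a)) x = 0 := by
    rw [hev.fderiv_eq]; exact fderiv_const_apply 0
  have hL : fderiv ℂ (fun a => 1 + b * Complex.exp (β * ψ a)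
      + ∑ j, a j * Complex.exp (γ j * ψ a)) x = _ := htotal.fderiv
  rw [hfz] at hL
  have hL0 := congrFun (congrArg (fun (L : (Fin d → ℂ) →L[ℂ] ℂ) => (L : (Fin d → ℂ) → ℂ))
    hL.symm) (Pi.single i 1)
  simp only [ContinuousLinearMap.add_apply, ContinuousLinearMap.coe_smul', Pi.smul_apply,
    ContinuousLinearMap.coe_sum', Finset.sum_apply, ContinuousLinearMap.proj_apply,
    ContinuousLinearMap.zero_apply, smul_eq_mul, Pi.single_apply] at hL0
  have hps : ∑ j : Fin d, (x j * (Complex.exp (γ j * ψ x) * (γ j * ψ' (Pi.single i 1)))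
      + Complex.exp (γ j * ψ x) * if j = i then (1:ℂ) else 0)
      = (∑ j : Fin d, x j * (γ j * Complex.exp (γ j * ψ x))) * ψ' (Pi.single i 1)
        + Complex.exp (γ i * ψ x) := by
    rw [Finset.sum_add_distrib, Finset.sum_mul]
    congr 1
    · exact Finset.sum_congr rfl fun j _ => by ring
    · simp
  rw [hps] at hL0
  have hpd : pd i ψ x = ψ' (Pi.single i 1) := rfl
  rw [hpd]
  linear_combination hL0

lemma pd_gfun (hψa : AnalyticOnNhd ℂ ψ U) {x : Fin d → ℂ} (hx : x ∈ U) (μ : ℂ) (i : Fin d) :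
    pd i (gfun ψ μ) x = μ * Complex.exp (μ * ψ x) * pd i ψ x := by
  have hψd : HasFDerivAt ψ (fderiv ℂ ψ x) x := (diffAt hψa hx).hasFDerivAt
  have h : HasFDerivAt (gfun ψ μ) (Complex.exp (μ * ψ x) • (μ • fderiv ℂ ψ x)) x :=
    (hψd.const_mul μ).cexp
  show fderiv ℂ (gfun ψ μ) x (Pi.single i 1) = _
  rw [h.fderiv]
  simp only [ContinuousLinearMap.coe_smul', Pi.smul_apply, smul_eq_mul]
  show Complex.exp (μ * ψ x) * (μ * pd i ψ x) = _
  ring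

end Setting

section Setting2
variable {γ : Fin d → ℂ} {b β A : ℂ} {ψ : (Fin d → ℂ) → ℂ}

lemma starMu (hU : IsOpen U) (hψa : AnalyticOnNhd ℂ ψ U)
    (heq : ∀ a ∈ U, 1 + b * Complex.exp (β * ψ a)
      + ∑ j, a j * Complex.exp (γ j * ψ a) = 0)
    {x : Fin d → ℂ} (hx : x ∈ U) (i : Fin d) (μ : ℂ) :
    β * pd i (gfun ψ μ) x
      + ∑ j, (β - γ j) * (x j * (if μ + γ j = 0 then μ * pd i ψ x
          else (μ / (μ + γ j)) * pd i (gfun ψ (μ + γ j)) x))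
      = μ * (Complex.exp (μ * ψ x) * Complex.exp (γ i * ψ x)) := by
  have hT := heq x hx
  have hF := keyDeriv hU hψa heq hx i
  have hV : ∀ j : Fin d, (if μ + γ j = 0 then μ * pd i ψ x
      else (μ / (μ + γ j)) * pd i (gfun ψ (μ + γ j)) x)
      = μ * (Complex.exp (μ * ψ x) * Complex.exp (γ j * ψ x)) * pd i ψ x := by
    intro j
    split_ifs with h
    · have : Complex.exp (μ * ψ x) * Complex.exp (γ j * ψ x) = 1 := by
        rw [← Complex.exp_add, ← add_mul, h, zero_mul, Complex.exp_zero]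
      rw [this]; ring
    · rw [pd_gfun hψa hx (μ + γ j) i,
        show (μ + γ j) * ψ x = μ * ψ x + γ j * ψ x from by ring, Complex.exp_add]
      field_simp
  have hsum : ∑ j, (β - γ j) * (x j * (if μ + γ j = 0 then μ * pd i ψ x
        else (μ / (μ + γ j)) * pd i (gfun ψ (μ + γ j)) x))
      = μ * Complex.exp (μ * ψ x) * pd i ψ x * β * (∑ j, x j * Complex.exp (γ j * ψ x))
        - μ * Complex.exp (μ * ψ x) * pd i ψ x
          * (∑ j, x j * (γ j * Complex.exp (γ j * ψ x))) := by
    rw [Finset.mul_sum, Finset.mul_sum, ← Finset.sum_sub_distrib]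
    exact Finset.sum_congr rfl fun j _ => by rw [hV j]; ring
  rw [hsum, pd_gfun hψa hx μ i]
  linear_combination (μ * pd i ψ x * Complex.exp (μ * ψ x) * β) * hT
    - (μ * Complex.exp (μ * ψ x)) * hF

lemma starPsi (hU : IsOpen U) (hψa : AnalyticOnNhd ℂ ψ U)
    (heq : ∀ a ∈ U, 1 + b * Complex.exp (β * ψ a)
      + ∑ j, a j * Complex.exp (γ j * ψ a) = 0)
    {x : Fin d → ℂ} (hx : x ∈ U) (i : Fin d) :
    β * pd i ψ x
      + ∑ j, (β - γ j) * (x j * (if γ j = 0 then pd i ψ x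
          else (γ j)⁻¹ * pd i (gfun ψ (γ j)) x))
      = Complex.exp (γ i * ψ x) := by
  have hT := heq x hx
  have hF := keyDeriv hU hψa heq hx i
  have hV : ∀ j : Fin d, (if γ j = 0 then pd i ψ x
      else (γ j)⁻¹ * pd i (gfun ψ (γ j)) x)
      = Complex.exp (γ j * ψ x) * pd i ψ x := by
    intro j
    split_ifs with h
    · rw [h, zero_mul, Complex.exp_zero]; ring
    · rw [pd_gfun hψa hx (γ j) i]
      field_simp
  have hsum : ∑ j, (β - γ j) * (x j * (if γ j = 0 then pd i ψ x
        else (γ j)⁻¹ * pd i (gfun ψ (γ j)) x))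
      = pd i ψ x * β * (∑ j, x j * Complex.exp (γ j * ψ x))
        - pd i ψ x * (∑ j, x j * (γ j * Complex.exp (γ j * ψ x))) := by
    rw [Finset.mul_sum, Finset.mul_sum, ← Finset.sum_sub_distrib]
    exact Finset.sum_congr rfl fun j _ => by rw [hV j]; ring
  rw [hsum]
  linear_combination (pd i ψ x * β) * hT - hF

end Setting2

section Ident
variable {β A : ℂ}

lemma ident_g {γ : Fin d → ℂ} (m : Fin d → ℕ) (i : Fin d) (μ sm : ℂ) (N : ℕ)
    (hN : 1 ≤ N) (hsum : ∑ j, m j = N - 1) (hsm : sm = ∑ j, (m j : ℂ) * γ j) :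
    β⁻¹ * (μ * PP β A (μ + γ i) sm (N - 1)
      - ∑ j, (β - γ j) * ((m j : ℂ) *
         (if μ + γ j = 0 then μ * PP0 β A ((γ i + sm) - γ j) (N - 1)
          else (μ / (μ + γ j)) * PP β A (μ + γ j) ((γ i + sm) - γ j) (N - 1))))
    = PP β A μ (γ i + sm) N := by
  rcases Nat.lt_or_ge N 2 with h2 | h2
  · -- N = 1
    have hN1 : N = 1 := by omega
    subst hN1
    have hm : ∀ j, m j = 0 := by
      intro j
      exact Finset.sum_eq_zero_iff.mp hsum j (Finset.mem_univ j)
    have hsm0 : sm = 0 := by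
      rw [hsm]
      exact Finset.sum_eq_zero fun j _ => by rw [hm j]; simp
    have hz : ∑ j, (β - γ j) * ((m j : ℂ) *
         (if μ + γ j = 0 then μ * PP0 β A ((γ i + sm) - γ j) 0
          else (μ / (μ + γ j)) * PP β A (μ + γ j) ((γ i + sm) - γ j) 0)) = 0 :=
      Finset.sum_eq_zero fun j _ => by rw [hm j]; simp
    rw [hz, hsm0, add_zero]
    show β⁻¹ * (μ * PP β A (μ + γ i) 0 0 - 0) = PP β A μ (γ i) 1
    norm_num [PP]
    ring
  · -- 2 ≤ N
    have hN10 : N - 1 ≠ 0 := by omega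
    have hN0 : N ≠ 0 := by omega
    have hNN : N - 1 - 1 = N - 2 := by omega
    set C : ℂ := Complex.exp ((μ + (γ i + sm)) * A) * (β⁻¹) ^ (N - 1)
      * ∏ k ∈ Finset.range (N - 2), (μ + (γ i + sm) - ((k : ℂ) + 1) * β) with hC
    have hQ : ∀ j : Fin d, (if μ + γ j = 0 then μ * PP0 β A ((γ i + sm) - γ j) (N - 1)
          else (μ / (μ + γ j)) * PP β A (μ + γ j) ((γ i + sm) - γ j) (N - 1)) = μ * C := by
      intro j
      split_ifs with h
      · rw [PP0, hNN, hC]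
        rw [show (γ i + sm) - γ j = μ + (γ i + sm) from by linear_combination -h]
      · rw [PP, if_neg hN10, hNN, hC]
        rw [show (μ + γ j) + ((γ i + sm) - γ j) = μ + (γ i + sm) from by ring]
        have hcc : μ / (μ + γ j) * (μ + γ j) = μ := div_mul_cancel₀ μ h
        linear_combination (Complex.exp ((μ + (γ i + sm)) * A) * (β⁻¹) ^ (N - 1)
          * ∏ k ∈ Finset.range (N - 2), (μ + (γ i + sm) - ((k : ℂ) + 1) * β)) * hcc
    have hcastsum : ∑ j, ((m j : ℕ) : ℂ) = ((N - 1 : ℕ) : ℂ) := by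
      rw [← Nat.cast_sum, hsum]
    have hsumQ : ∑ j, (β - γ j) * ((m j : ℂ) *
         (if μ + γ j = 0 then μ * PP0 β A ((γ i + sm) - γ j) (N - 1)
          else (μ / (μ + γ j)) * PP β A (μ + γ j) ((γ i + sm) - γ j) (N - 1)))
        = μ * C * β * ((N - 1 : ℕ) : ℂ) - μ * C * sm := by
      have : ∀ j ∈ Finset.univ, (β - γ j) * ((m j : ℂ) *
         (if μ + γ j = 0 then μ * PP0 β A ((γ i + sm) - γ j) (N - 1)
          else (μ / (μ + γ j)) * PP β A (μ + γ j) ((γ i + sm) - γ j) (N - 1)))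
          = μ * C * β * (m j : ℂ) - μ * C * ((m j : ℂ) * γ j) := fun j _ => by
        rw [hQ j]; ring
      rw [Finset.sum_congr rfl this, Finset.sum_sub_distrib, ← Finset.mul_sum,
        ← Finset.mul_sum, hcastsum, ← hsm]
    have hPP1 : PP β A (μ + γ i) sm (N - 1) = (μ + γ i) * C := by
      rw [PP, if_neg hN10, hNN, hC]
      have : ∏ k ∈ Finset.range (N - 2), ((μ + γ i) + sm - ((k : ℂ) + 1) * β)
          = ∏ k ∈ Finset.range (N - 2), (μ + (γ i + sm) - ((k : ℂ) + 1) * β) :=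
        Finset.prod_congr rfl fun k _ => by ring
      rw [this]
      rw [show (μ + γ i) + sm = μ + (γ i + sm) from by ring]
      ring
    have hPPN : PP β A μ (γ i + sm) N
        = μ * C * β⁻¹ * (μ + (γ i + sm) - ((N - 1 : ℕ) : ℂ) * β) := by
      rw [PP, if_neg hN0, hC]
      have hsplit : ∏ k ∈ Finset.range (N - 1), (μ + (γ i + sm) - ((k : ℂ) + 1) * β)
          = (∏ k ∈ Finset.range (N - 2), (μ + (γ i + sm) - ((k : ℂ) + 1) * β))
            * (μ + (γ i + sm) - (((N - 2 : ℕ) : ℂ) + 1) * β) := by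
        rw [show N - 1 = (N - 2) + 1 from by omega, Finset.prod_range_succ]
      have hcast : ((N - 2 : ℕ) : ℂ) + 1 = ((N - 1 : ℕ) : ℂ) := by
        rw [Nat.cast_sub (by omega : 2 ≤ N), Nat.cast_sub (by omega : 1 ≤ N)]
        push_cast; ring
      have hpow : (β⁻¹) ^ N = (β⁻¹) ^ (N - 1) * β⁻¹ := by
        rw [← pow_succ]
        congr 1
        omega
      rw [hsplit, hcast, hpow]
      ring
    rw [hsumQ, hPP1, hPPN]
    ring
end Ident

section Ident2
variable {β A : ℂ}

lemma ident_psi {γ : Fin d → ℂ} (m : Fin d → ℕ) (i : Fin d) (sm : ℂ) (N : ℕ)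
    (hN : 1 ≤ N) (hsum : ∑ j, m j = N - 1) (hsm : sm = ∑ j, (m j : ℂ) * γ j) :
    β⁻¹ * (PP β A (γ i) sm (N - 1)
      - ∑ j, (β - γ j) * ((m j : ℂ) *
         (if γ j = 0 then PP0 β A ((γ i + sm) - γ j) (N - 1)
          else (γ j)⁻¹ * PP β A (γ j) ((γ i + sm) - γ j) (N - 1))))
    = PP0 β A (γ i + sm) N := by
  rcases Nat.lt_or_ge N 2 with h2 | h2
  · have hN1 : N = 1 := by omega
    subst hN1
    have hm : ∀ j, m j = 0 := by
      intro j
      exact Finset.sum_eq_zero_iff.mp hsum j (Finset.mem_univ j)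
    have hsm0 : sm = 0 := by
      rw [hsm]
      exact Finset.sum_eq_zero fun j _ => by rw [hm j]; simp
    have hz : ∑ j, (β - γ j) * ((m j : ℂ) *
         (if γ j = 0 then PP0 β A ((γ i + sm) - γ j) 0
          else (γ j)⁻¹ * PP β A (γ j) ((γ i + sm) - γ j) 0)) = 0 :=
      Finset.sum_eq_zero fun j _ => by rw [hm j]; simp
    rw [hz, hsm0, add_zero]
    show β⁻¹ * (PP β A (γ i) 0 0 - 0) = PP0 β A (γ i) 1
    norm_num [PP, PP0]
    ring
  · have hN10 : N - 1 ≠ 0 := by omega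
    have hN0 : N ≠ 0 := by omega
    have hNN : N - 1 - 1 = N - 2 := by omega
    set C : ℂ := Complex.exp ((γ i + sm) * A) * (β⁻¹) ^ (N - 1)
      * ∏ k ∈ Finset.range (N - 2), (γ i + sm - ((k : ℂ) + 1) * β) with hC
    have hQ : ∀ j : Fin d, (if γ j = 0 then PP0 β A ((γ i + sm) - γ j) (N - 1)
          else (γ j)⁻¹ * PP β A (γ j) ((γ i + sm) - γ j) (N - 1)) = C := by
      intro j
      split_ifs with h
      · rw [PP0, hNN, hC]
        rw [show (γ i + sm) - γ j = γ i + sm from by linear_combination -h]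
      · rw [PP, if_neg hN10, hNN, hC]
        rw [show γ j + ((γ i + sm) - γ j) = γ i + sm from by ring]
        have hcc : (γ j)⁻¹ * γ j = 1 := inv_mul_cancel₀ h
        linear_combination (Complex.exp ((γ i + sm) * A) * (β⁻¹) ^ (N - 1)
          * ∏ k ∈ Finset.range (N - 2), (γ i + sm - ((k : ℂ) + 1) * β)) * hcc
    have hcastsum : ∑ j, ((m j : ℕ) : ℂ) = ((N - 1 : ℕ) : ℂ) := by
      rw [← Nat.cast_sum, hsum]
    have hsumQ : ∑ j, (β - γ j) * ((m j : ℂ) *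
         (if γ j = 0 then PP0 β A ((γ i + sm) - γ j) (N - 1)
          else (γ j)⁻¹ * PP β A (γ j) ((γ i + sm) - γ j) (N - 1)))
        = C * β * ((N - 1 : ℕ) : ℂ) - C * sm := by
      have : ∀ j ∈ Finset.univ, (β - γ j) * ((m j : ℂ) *
         (if γ j = 0 then PP0 β A ((γ i + sm) - γ j) (N - 1)
          else (γ j)⁻¹ * PP β A (γ j) ((γ i + sm) - γ j) (N - 1)))
          = C * β * (m j : ℂ) - C * ((m j : ℂ) * γ j) := fun j _ => by
        rw [hQ j]; ring
      rw [Finset.sum_congr rfl this, Finset.sum_sub_distrib, ← Finset.mul_sum,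
        ← Finset.mul_sum, hcastsum, ← hsm]
    have hPP1 : PP β A (γ i) sm (N - 1) = γ i * C := by
      rw [PP, if_neg hN10, hNN, hC]
      ring
    have hPPN : PP0 β A (γ i + sm) N
        = C * β⁻¹ * (γ i + sm - ((N - 1 : ℕ) : ℂ) * β) := by
      rw [PP0, hC]
      have hsplit : ∏ k ∈ Finset.range (N - 1), (γ i + sm - ((k : ℂ) + 1) * β)
          = (∏ k ∈ Finset.range (N - 2), (γ i + sm - ((k : ℂ) + 1) * β))
            * (γ i + sm - (((N - 2 : ℕ) : ℂ) + 1) * β) := by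
        rw [show N - 1 = (N - 2) + 1 from by omega, Finset.prod_range_succ]
      have hcast : ((N - 2 : ℕ) : ℂ) + 1 = ((N - 1 : ℕ) : ℂ) := by
        rw [Nat.cast_sub (by omega : 2 ≤ N), Nat.cast_sub (by omega : 1 ≤ N)]
        push_cast; ring
      have hpow : (β⁻¹) ^ N = (β⁻¹) ^ (N - 1) * β⁻¹ := by
        rw [← pow_succ]
        congr 1
        omega
      rw [hsplit, hcast, hpow]
      ring
    rw [hsumQ, hPP1, hPPN]
    ring
end Ident2

section Helpers
variable {γ : Fin d → ℂ}

lemma sum_update_add (n : Fin d → ℕ) (i : Fin d) :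
    ∑ k, Function.update n i (n i + 1) k = (∑ k, n k) + 1 := by
  rw [← Finset.add_sum_erase _ _ (Finset.mem_univ i), Function.update_self,
    Finset.sum_congr rfl (fun k hk => Function.update_of_ne (Finset.ne_of_mem_erase hk) _ n),
    ← Finset.add_sum_erase _ (fun k => n k) (Finset.mem_univ i)]
  have h0 : Finset.sum (Finset.univ.erase i) n = ∑ x ∈ Finset.univ.erase i, n x := rfl
  omega

lemma sum_update_sub (n : Fin d → ℕ) (j : Fin d) (h : n j ≠ 0) :
    ∑ k, Function.update n j (n j - 1) k = (∑ k, n k) - 1 := by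
  rw [← Finset.add_sum_erase _ _ (Finset.mem_univ j), Function.update_self,
    Finset.sum_congr rfl (fun k hk => Function.update_of_ne (Finset.ne_of_mem_erase hk) _ n),
    ← Finset.add_sum_erase _ (fun k => n k) (Finset.mem_univ j)]
  have h0 : Finset.sum (Finset.univ.erase j) n = ∑ x ∈ Finset.univ.erase j, n x := rfl
  omega

lemma Sg_update_add (n : Fin d → ℕ) (i : Fin d) :
    Sg γ (Function.update n i (n i + 1)) = Sg γ n + γ i := by
  rw [Sg, Sg, ← Finset.add_sum_erase _ _ (Finset.mem_univ i),
    ← Finset.add_sum_erase _ (fun k => (n k : ℂ) * γ k) (Finset.mem_univ i),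
    Finset.sum_congr rfl
      (fun k hk => by rw [Function.update_of_ne (Finset.ne_of_mem_erase hk) _ n]),
    Function.update_self]
  push_cast
  ring

lemma Sg_update_sub (n : Fin d → ℕ) (j : Fin d) (h : n j ≠ 0) :
    Sg γ (Function.update n j (n j - 1)) = Sg γ n - γ j := by
  rw [Sg, Sg, ← Finset.add_sum_erase _ _ (Finset.mem_univ j),
    ← Finset.add_sum_erase _ (fun k => (n k : ℂ) * γ k) (Finset.mem_univ j),
    Finset.sum_congr rfl
      (fun k hk => by rw [Function.update_of_ne (Finset.ne_of_mem_erase hk) _ n]),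
    Function.update_self, Nat.cast_sub (by omega : 1 ≤ n j)]
  push_cast
  ring

lemma iterPD_unpeel {n' : Fin d → ℕ} {i : Fin d} (htop : ∀ k, i < k → n' k = 0)
    (f : (Fin d → ℂ) → ℂ) :
    iterPD (Function.update n' i (n' i + 1)) f = iterPD n' (pd i f) := by
  have h1 := iterPD_peel (n := Function.update n' i (n' i + 1)) (i := i)
    (fun k hk => by
      rw [Function.update_of_ne (ne_of_gt hk)]
      exact htop k hk)
    (by rw [Function.update_self]; omega) f
  have h2 : Function.update (Function.update n' i (n' i + 1)) i
      (Function.update n' i (n' i + 1) i - 1) = n' := by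
    funext k
    by_cases hk : k = i
    · subst hk
      simp
    · simp [Function.update_of_ne hk]
  rw [h1, h2]

end Helpers

lemma main_ind (hU : IsOpen U) (hU0 : (0 : Fin d → ℂ) ∈ U) {γ : Fin d → ℂ} {b β A : ℂ}
    {ψ : (Fin d → ℂ) → ℂ} (hβ : β ≠ 0) (hψa : AnalyticOnNhd ℂ ψ U) (hψ0 : ψ 0 = A)
    (heq : ∀ a ∈ U, 1 + b * Complex.exp (β * ψ a)
      + ∑ j, a j * Complex.exp (γ j * ψ a) = 0) :
    ∀ N : ℕ, ∀ n : Fin d → ℕ, ∑ j, n j = N →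
      (1 ≤ N → iterPD n ψ 0 = PP0 β A (Sg γ n) N) ∧
      (∀ μ : ℂ, iterPD n (gfun ψ μ) 0 = PP β A μ (Sg γ n) N) := by
  intro N
  induction N using Nat.strong_induction_on with
  | _ N IH =>
  intro n hn
  rcases Nat.eq_zero_or_pos N with rfl | hNpos
  · refine ⟨fun h => absurd h (by omega), fun μ => ?_⟩
    have hz : ∀ k, n k = 0 := fun k => Finset.sum_eq_zero_iff.mp hn k (Finset.mem_univ k)
    rw [J_zero_counts hz, PP, if_pos rfl]
    show Complex.exp (μ * ψ 0) = _
    rw [hψ0]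
  · have hex : (Finset.univ.filter (fun k => n k ≠ 0)).Nonempty := by
      have hnz : ∑ j, n j ≠ 0 := by omega
      obtain ⟨k, _, hk⟩ := Finset.exists_ne_zero_of_sum_ne_zero hnz
      exact ⟨k, Finset.mem_filter.mpr ⟨Finset.mem_univ k, hk⟩⟩
    set i := (Finset.univ.filter (fun k => n k ≠ 0)).max' hex with hidef
    have hi : n i ≠ 0 := (Finset.mem_filter.mp (Finset.max'_mem _ hex)).2
    have htop : ∀ k, i < k → n k = 0 := by
      intro k hk
      by_contra hk0
      exact absurd (Finset.le_max' _ k (Finset.mem_filter.mpr ⟨Finset.mem_univ k, hk0⟩))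
        (not_le.mpr hk)
    set m := Function.update n i (n i - 1) with hmdef
    have hmsum : ∑ k, m k = N - 1 := by rw [hmdef, sum_update_sub n i hi, hn]
    have hmtop : ∀ k, i < k → m k = 0 := fun k hk => by
      rw [hmdef, Function.update_of_ne (ne_of_gt hk)]
      exact htop k hk
    set sm := Sg γ m with hsmdef
    have hsm' : sm = ∑ j, (m j : ℂ) * γ j := hsmdef
    have hScast : Sg γ n = γ i + sm := by
      rw [hsmdef, hmdef, Sg_update_sub n i hi]
      ring
    have hNm : N - 1 < N := by omega
    have hm'top : ∀ j : Fin d, m j ≠ 0 → ∀ k, i < k → Function.update m j (m j - 1) k = 0 := by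
      intro j hmj k hk
      by_cases hkj : k = j
      · exact absurd (hmtop j (hkj ▸ hk)) hmj
      · rw [Function.update_of_ne hkj]
        exact hmtop k hk
    have hunpeel : ∀ (j : Fin d), m j ≠ 0 → ∀ f : (Fin d → ℂ) → ℂ,
        iterPD (Function.update m j (m j - 1)) (pd i f)
        = iterPD (Function.update (Function.update m j (m j - 1)) i
            (Function.update m j (m j - 1) i + 1)) f :=
      fun j hmj f => (iterPD_unpeel (hm'top j hmj) f).symm
    have hNge2 : ∀ j : Fin d, m j ≠ 0 → 2 ≤ N := by
      intro j hmj
      have h1 : m j ≤ ∑ k, m k :=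
        Finset.single_le_sum (fun k _ => Nat.zero_le _) (Finset.mem_univ j)
      omega
    have hn''sum : ∀ j : Fin d, m j ≠ 0 →
        ∑ k, Function.update (Function.update m j (m j - 1)) i
          (Function.update m j (m j - 1) i + 1) k = N - 1 := by
      intro j hmj
      rw [sum_update_add, sum_update_sub m j hmj, hmsum]
      have := hNge2 j hmj
      omega
    have hn''S : ∀ j : Fin d, m j ≠ 0 →
        Sg γ (Function.update (Function.update m j (m j - 1)) i
          (Function.update m j (m j - 1) i + 1)) = (γ i + sm) - γ j := by
      intro j hmj
      rw [Sg_update_add, Sg_update_sub m j hmj, ← hsmdef]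
      ring
    have hpdψa : AnalyticOnNhd ℂ (pd i ψ) U := analyticOnNhd_pd hU hψa i
    constructor
    · -- ψ part
      intro _
      have hpeel : iterPD n ψ = iterPD m (pd i ψ) := by
        rw [hmdef]
        exact iterPD_peel htop (by omega) ψ
      have hVana : ∀ j : Fin d, AnalyticOnNhd ℂ (fun x => (if γ j = 0 then pd i ψ x else (γ j)⁻¹ * pd i (gfun ψ (γ j)) x)) U := by
        intro j
        by_cases hc : γ j = 0
        · simp only [if_pos hc]
          exact hpdψa
        · simp only [if_neg hc]
          exact analyticOnNhd_const.mul (analyticOnNhd_pd hU (analyticOnNhd_gfun hψa (γ j)) i)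
      have hterm_ana : ∀ j : Fin d, AnalyticOnNhd ℂ
          (fun x => (β - γ j) * (x j * (if γ j = 0 then pd i ψ x else (γ j)⁻¹ * pd i (gfun ψ (γ j)) x))) U :=
        fun j => analyticOnNhd_const.mul (analyticOnNhd_coordmul (hVana j) j)
      have hsum_ana : AnalyticOnNhd ℂ
          (fun x => ∑ j, (β - γ j) * (x j * (if γ j = 0 then pd i ψ x else (γ j)⁻¹ * pd i (gfun ψ (γ j)) x))) U :=
        analyticOnNhd_finsum _ (fun j _ => hterm_ana j)
      have hstar : Set.EqOn (pd i ψ)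
          (fun x => β⁻¹ * (gfun ψ (γ i) x
            + (-1) * ∑ j, (β - γ j) * (x j * (if γ j = 0 then pd i ψ x else (γ j)⁻¹ * pd i (gfun ψ (γ j)) x)))) U := by
        intro x hx
        have h := starPsi hU hψa heq hx i
        show pd i ψ x = β⁻¹ * (gfun ψ (γ i) x
            + (-1) * ∑ j, (β - γ j) * (x j * (if γ j = 0 then pd i ψ x else (γ j)⁻¹ * pd i (gfun ψ (γ j)) x)))
        have hg : gfun ψ (γ i) x = Complex.exp (γ i * ψ x) := rfl
        rw [hg, inv_mul_eq_div, eq_div_iff hβ]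
        linear_combination h
      have hterm_val : ∀ j : Fin d,
          iterPD m (fun x => (β - γ j) * (x j * (if γ j = 0 then pd i ψ x else (γ j)⁻¹ * pd i (gfun ψ (γ j)) x))) 0
          = (β - γ j) * ((m j : ℂ) * (if γ j = 0 then PP0 β A ((γ i + sm) - γ j) (N - 1) else (γ j)⁻¹ * PP β A (γ j) ((γ i + sm) - γ j) (N - 1))) := by
        intro j
        rw [J_const_mul hU hU0 (analyticOnNhd_coordmul (hVana j) j) (β - γ j) m,
          J_coordmul hU hU0 (hVana j) j m]
        by_cases hmj : m j = 0
        · rw [hmj]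
          simp
        · congr 2
          by_cases hdeg : γ j = 0
          · have hVeq : (fun x : Fin d → ℂ => (if γ j = 0 then pd i ψ x else (γ j)⁻¹ * pd i (gfun ψ (γ j)) x)) = pd i ψ := by
              funext x
              rw [if_pos hdeg]
            rw [hVeq, if_pos hdeg, hunpeel j hmj ψ,
              (IH (N-1) hNm _ (hn''sum j hmj)).1 (by have := hNge2 j hmj; omega),
              hn''S j hmj]
          · have hVeq : (fun x : Fin d → ℂ => (if γ j = 0 then pd i ψ x else (γ j)⁻¹ * pd i (gfun ψ (γ j)) x))
                = fun x => (γ j)⁻¹ * pd i (gfun ψ (γ j)) x := by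
              funext x
              rw [if_neg hdeg]
            rw [hVeq, if_neg hdeg,
              J_const_mul hU hU0
                (analyticOnNhd_pd hU (analyticOnNhd_gfun hψa (γ j)) i) ((γ j)⁻¹) _,
              hunpeel j hmj (gfun ψ (γ j)),
              (IH (N-1) hNm _ (hn''sum j hmj)).2 (γ j),
              hn''S j hmj]
      have hmain := (IH (N-1) hNm m hmsum).2 (γ i)
      calc iterPD n ψ 0 = iterPD m (pd i ψ) 0 := by rw [hpeel]
        _ = iterPD m (fun x => β⁻¹ * (gfun ψ (γ i) x
              + (-1) * ∑ j, (β - γ j) * (x j * (if γ j = 0 then pd i ψ x else (γ j)⁻¹ * pd i (gfun ψ (γ j)) x)))) 0 :=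
            J_congr hU hU0 hstar m
        _ = β⁻¹ * iterPD m (fun x => gfun ψ (γ i) x
              + (-1) * ∑ j, (β - γ j) * (x j * (if γ j = 0 then pd i ψ x else (γ j)⁻¹ * pd i (gfun ψ (γ j)) x))) 0 :=
            J_const_mul hU hU0
              ((analyticOnNhd_gfun hψa (γ i)).add (analyticOnNhd_const.mul hsum_ana)) β⁻¹ m
        _ = β⁻¹ * (iterPD m (gfun ψ (γ i)) 0
              + iterPD m (fun x => (-1) * ∑ j, (β - γ j) * (x j * (if γ j = 0 then pd i ψ x else (γ j)⁻¹ * pd i (gfun ψ (γ j)) x))) 0) := by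
            rw [J_add hU hU0 (analyticOnNhd_gfun hψa (γ i)) (analyticOnNhd_const.mul hsum_ana) m]
        _ = β⁻¹ * (iterPD m (gfun ψ (γ i)) 0
              + (-1) * iterPD m (fun x => ∑ j, (β - γ j) * (x j * (if γ j = 0 then pd i ψ x else (γ j)⁻¹ * pd i (gfun ψ (γ j)) x))) 0) := by
            rw [J_const_mul hU hU0 hsum_ana (-1) m]
        _ = β⁻¹ * (iterPD m (gfun ψ (γ i)) 0
              + (-1) * ∑ j, iterPD m (fun x => (β - γ j) * (x j * (if γ j = 0 then pd i ψ x else (γ j)⁻¹ * pd i (gfun ψ (γ j)) x))) 0) := by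
            rw [J_sum hU hU0 Finset.univ (fun j _ => hterm_ana j) m]
        _ = β⁻¹ * (PP β A (γ i) sm (N-1)
              + (-1) * ∑ j, (β - γ j) * ((m j : ℂ) * (if γ j = 0 then PP0 β A ((γ i + sm) - γ j) (N - 1) else (γ j)⁻¹ * PP β A (γ j) ((γ i + sm) - γ j) (N - 1)))) := by
            rw [hmain, ← hsmdef, Finset.sum_congr rfl (fun j _ => hterm_val j)]
        _ = PP0 β A (Sg γ n) N := by
            rw [hScast]
            have hident := ident_psi (β := β) (A := A) m i sm N hNpos hmsum hsm'
            linear_combination hident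
    · -- g part
      intro μ
      have hpeel : iterPD n (gfun ψ μ) = iterPD m (pd i (gfun ψ μ)) := by
        rw [hmdef]
        exact iterPD_peel htop (by omega) (gfun ψ μ)
      have hVana : ∀ j : Fin d, AnalyticOnNhd ℂ (fun x => (if μ + γ j = 0 then μ * pd i ψ x else (μ / (μ + γ j)) * pd i (gfun ψ (μ + γ j)) x)) U := by
        intro j
        by_cases hc : μ + γ j = 0
        · simp only [if_pos hc]
          exact analyticOnNhd_const.mul hpdψa
        · simp only [if_neg hc]
          exact analyticOnNhd_const.mul (analyticOnNhd_pd hU (analyticOnNhd_gfun hψa (μ + γ j)) i)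
      have hterm_ana : ∀ j : Fin d, AnalyticOnNhd ℂ
          (fun x => (β - γ j) * (x j * (if μ + γ j = 0 then μ * pd i ψ x else (μ / (μ + γ j)) * pd i (gfun ψ (μ + γ j)) x))) U :=
        fun j => analyticOnNhd_const.mul (analyticOnNhd_coordmul (hVana j) j)
      have hsum_ana : AnalyticOnNhd ℂ
          (fun x => ∑ j, (β - γ j) * (x j * (if μ + γ j = 0 then μ * pd i ψ x else (μ / (μ + γ j)) * pd i (gfun ψ (μ + γ j)) x))) U :=
        analyticOnNhd_finsum _ (fun j _ => hterm_ana j)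
      have hstar : Set.EqOn (pd i (gfun ψ μ))
          (fun x => β⁻¹ * (μ * gfun ψ (μ + γ i) x
            + (-1) * ∑ j, (β - γ j) * (x j * (if μ + γ j = 0 then μ * pd i ψ x else (μ / (μ + γ j)) * pd i (gfun ψ (μ + γ j)) x)))) U := by
        intro x hx
        have h := starMu hU hψa heq hx i μ
        show pd i (gfun ψ μ) x = β⁻¹ * (μ * gfun ψ (μ + γ i) x
            + (-1) * ∑ j, (β - γ j) * (x j * (if μ + γ j = 0 then μ * pd i ψ x else (μ / (μ + γ j)) * pd i (gfun ψ (μ + γ j)) x)))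
        have hg : gfun ψ (μ + γ i) x
            = Complex.exp (μ * ψ x) * Complex.exp (γ i * ψ x) := by
          show Complex.exp ((μ + γ i) * ψ x) = _
          rw [show (μ + γ i) * ψ x = μ * ψ x + γ i * ψ x from by ring, Complex.exp_add]
        rw [hg, inv_mul_eq_div, eq_div_iff hβ]
        linear_combination h
      have hterm_val : ∀ j : Fin d,
          iterPD m (fun x => (β - γ j) * (x j * (if μ + γ j = 0 then μ * pd i ψ x else (μ / (μ + γ j)) * pd i (gfun ψ (μ + γ j)) x))) 0
          = (β - γ j) * ((m j : ℂ) * (if μ + γ j = 0 then μ * PP0 β A ((γ i + sm) - γ j) (N - 1) else (μ / (μ + γ j)) * PP β A (μ + γ j) ((γ i + sm) - γ j) (N - 1))) := by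
        intro j
        rw [J_const_mul hU hU0 (analyticOnNhd_coordmul (hVana j) j) (β - γ j) m,
          J_coordmul hU hU0 (hVana j) j m]
        by_cases hmj : m j = 0
        · rw [hmj]
          simp
        · congr 2
          by_cases hdeg : μ + γ j = 0
          · have hVeq : (fun x : Fin d → ℂ => (if μ + γ j = 0 then μ * pd i ψ x else (μ / (μ + γ j)) * pd i (gfun ψ (μ + γ j)) x)) = fun x => μ * pd i ψ x := by
              funext x
              rw [if_pos hdeg]
            rw [hVeq, if_pos hdeg, J_const_mul hU hU0 hpdψa μ _, hunpeel j hmj ψ,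
              (IH (N-1) hNm _ (hn''sum j hmj)).1 (by have := hNge2 j hmj; omega),
              hn''S j hmj]
          · have hVeq : (fun x : Fin d → ℂ => (if μ + γ j = 0 then μ * pd i ψ x else (μ / (μ + γ j)) * pd i (gfun ψ (μ + γ j)) x))
                = fun x => (μ / (μ + γ j)) * pd i (gfun ψ (μ + γ j)) x := by
              funext x
              rw [if_neg hdeg]
            rw [hVeq, if_neg hdeg,
              J_const_mul hU hU0
                (analyticOnNhd_pd hU (analyticOnNhd_gfun hψa (μ + γ j)) i) (μ / (μ + γ j)) _,
              hunpeel j hmj (gfun ψ (μ + γ j)),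
              (IH (N-1) hNm _ (hn''sum j hmj)).2 (μ + γ j),
              hn''S j hmj]
      have hmain := (IH (N-1) hNm m hmsum).2 (μ + γ i)
      calc iterPD n (gfun ψ μ) 0 = iterPD m (pd i (gfun ψ μ)) 0 := by rw [hpeel]
        _ = iterPD m (fun x => β⁻¹ * (μ * gfun ψ (μ + γ i) x
              + (-1) * ∑ j, (β - γ j) * (x j * (if μ + γ j = 0 then μ * pd i ψ x else (μ / (μ + γ j)) * pd i (gfun ψ (μ + γ j)) x)))) 0 :=
            J_congr hU hU0 hstar m
        _ = β⁻¹ * iterPD m (fun x => μ * gfun ψ (μ + γ i) x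
              + (-1) * ∑ j, (β - γ j) * (x j * (if μ + γ j = 0 then μ * pd i ψ x else (μ / (μ + γ j)) * pd i (gfun ψ (μ + γ j)) x))) 0 :=
            J_const_mul hU hU0
              ((analyticOnNhd_const.mul (analyticOnNhd_gfun hψa (μ + γ i))).add
                (analyticOnNhd_const.mul hsum_ana)) β⁻¹ m
        _ = β⁻¹ * (iterPD m (fun x => μ * gfun ψ (μ + γ i) x) 0
              + iterPD m (fun x => (-1) * ∑ j, (β - γ j) * (x j * (if μ + γ j = 0 then μ * pd i ψ x else (μ / (μ + γ j)) * pd i (gfun ψ (μ + γ j)) x))) 0) := by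
            rw [J_add hU hU0 (analyticOnNhd_const.mul (analyticOnNhd_gfun hψa (μ + γ i)))
              (analyticOnNhd_const.mul hsum_ana) m]
        _ = β⁻¹ * (μ * iterPD m (gfun ψ (μ + γ i)) 0
              + (-1) * iterPD m (fun x => ∑ j, (β - γ j) * (x j * (if μ + γ j = 0 then μ * pd i ψ x else (μ / (μ + γ j)) * pd i (gfun ψ (μ + γ j)) x))) 0) := by
            rw [J_const_mul hU hU0 hsum_ana (-1) m,
              J_const_mul hU hU0 (analyticOnNhd_gfun hψa (μ + γ i)) μ m]
        _ = β⁻¹ * (μ * iterPD m (gfun ψ (μ + γ i)) 0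
              + (-1) * ∑ j, iterPD m (fun x => (β - γ j) * (x j * (if μ + γ j = 0 then μ * pd i ψ x else (μ / (μ + γ j)) * pd i (gfun ψ (μ + γ j)) x))) 0) := by
            rw [J_sum hU hU0 Finset.univ (fun j _ => hterm_ana j) m]
        _ = β⁻¹ * (μ * PP β A (μ + γ i) sm (N-1)
              + (-1) * ∑ j, (β - γ j) * ((m j : ℂ) * (if μ + γ j = 0 then μ * PP0 β A ((γ i + sm) - γ j) (N - 1) else (μ / (μ + γ j)) * PP β A (μ + γ j) ((γ i + sm) - γ j) (N - 1)))) := by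
            rw [hmain, ← hsmdef, Finset.sum_congr rfl (fun j _ => hterm_val j)]
        _ = PP β A μ (Sg γ n) N := by
            rw [hScast]
            have hident := ident_g (β := β) (A := A) m i μ sm N hNpos hmsum hsm'
            linear_combination hident

end Stmt0Aux


open Stmt0Aux

theorem stmt0 (d : ℕ) (hd : 1 ≤ d) (γ : Fin d → ℂ) (b β A : ℂ)
    (hb : b ≠ 0) (hβ : β ≠ 0)
    (hA : 1 + b * Complex.exp (β * A) = 0)
    (U : Set (Fin d → ℂ)) (hU : IsOpen U) (hU0 : (0 : Fin d → ℂ) ∈ U)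
    (ψ : (Fin d → ℂ) → ℂ) (hψ : AnalyticOn ℂ ψ U) (hψ0 : ψ 0 = A)
    (heq : ∀ a ∈ U, 1 + b * Complex.exp (β * ψ a)
      + ∑ i, a i * Complex.exp (γ i * ψ a) = 0)
    (n : Fin d → ℕ) (hn : 1 ≤ ∑ i, n i) :
    iterPD n (fun a => Complex.exp (ψ a)) 0 =
      -(Complex.exp (A * (1 + ∑ i, (n i : ℂ) * (γ i - 1))) /
          (b * β * Complex.exp (A * (β - 1))) ^ (∑ i, n i)) *
        ∏ i ∈ Finset.range (∑ i, n i - 1),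
          (-1 + ((i : ℂ) + 1) * β - ∑ j, (n j : ℂ) * γ j) := by
  have hψa : AnalyticOnNhd ℂ ψ U := (hU.analyticOn_iff_analyticOnNhd).mp hψ
  have h1 : (fun a => Complex.exp (ψ a)) = gfun ψ 1 := by
    funext a
    show Complex.exp (ψ a) = Complex.exp (1 * ψ a)
    rw [one_mul]
  set N := ∑ i, n i with hNdef
  set s := ∑ j, (n j : ℂ) * γ j with hsdef
  have hSg : Sg γ n = s := rfl
  have key := (main_ind hU hU0 hβ hψa hψ0 heq N n rfl).2 1
  rw [h1, key, hSg, PP, if_neg (by omega : N ≠ 0)]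
  -- final algebra
  have hsub : ∑ i, (n i : ℂ) * (γ i - 1) = s - (N : ℂ) := by
    have hterm : ∀ i ∈ Finset.univ, (n i : ℂ) * (γ i - 1) = (n i : ℂ) * γ i - (n i : ℂ) :=
      fun i _ => by ring
    rw [Finset.sum_congr rfl hterm, Finset.sum_sub_distrib, ← hsdef, ← Nat.cast_sum, ← hNdef]
  have hden : b * β * Complex.exp (A * (β - 1)) = -β * (Complex.exp A)⁻¹ := by
    rw [show A * (β - 1) = β * A - A from by ring, Complex.exp_sub, div_eq_mul_inv]
    have hbA : b * Complex.exp (β * A) = -1 := by linear_combination hA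
    linear_combination β * (Complex.exp A)⁻¹ * hbA
  have hprod : ∏ k ∈ Finset.range (N - 1), (-1 + ((k : ℂ) + 1) * β - s)
      = (-1 : ℂ) ^ (N - 1) * ∏ k ∈ Finset.range (N - 1), (1 + s - ((k : ℂ) + 1) * β) := by
    have hterm : ∀ k ∈ Finset.range (N - 1), (-1 + ((k : ℂ) + 1) * β - s)
        = (-1) * (1 + s - ((k : ℂ) + 1) * β) := fun k _ => by ring
    rw [Finset.prod_congr rfl hterm, Finset.prod_mul_distrib, Finset.prod_const,
      Finset.card_range]
  have hE1 : Complex.exp (A * (1 + (s - (N : ℂ))))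
      = Complex.exp ((1 + s) * A) * (Complex.exp A ^ N)⁻¹ := by
    rw [show A * (1 + (s - (N : ℂ))) = (1 + s) * A - (N : ℂ) * A from by ring,
      Complex.exp_sub, ← Complex.exp_nat_mul, div_eq_mul_inv]
  have hpowneg : (-β * (Complex.exp A)⁻¹) ^ N
      = (-1 : ℂ) ^ N * β ^ N * (Complex.exp A ^ N)⁻¹ := by
    rw [show -β * (Complex.exp A)⁻¹ = (-1) * β * (Complex.exp A)⁻¹ from by ring,
      mul_pow, mul_pow, inv_pow]
  have h11 : ((-1 : ℂ)) ^ N = (-1) * (-1) ^ (N - 1) := by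
    conv_lhs => rw [show N = (N - 1) + 1 from by omega]
    rw [pow_succ']
  have h12 : ((-1 : ℂ)) ^ (N - 1) * (-1) ^ (N - 1) = 1 := by
    rw [← mul_pow]
    norm_num
  rw [hsub, hden, hprod, hE1, hpowneg, h11]
  field_simp [Complex.exp_ne_zero, hβ]
  ring_nf
  congr 2
  rw [← mul_pow, mul_inv_cancel₀ hβ, one_pow, one_mul]
end

section
/- Let N ≥ 1 and 1 ≤ k ≤ N be integers. In the polynomial ring ℤ[ν, x₁, …, x_N], the following identity holds: Σ_{r=0}^{k−1} (−1)^{k−1−r} · C(k−1, r) · ( (r+1)·ν − 1 + Σ_{i=1}^N x_i )_{N−1} = (k−1)! · ν^{k−1} · Σ_{s ∈ S(N,k)} ∏_{B ∈ s} ( ν − 1 + Σ_{m ∈ B} x_m )_{|B|−1}, where the outer sum on the right runs over all set partitions s of {1,…,N} into k parts and the product runs over the parts B of s. -/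
/-- The falling factorial `(p)_k = ∏_{i=1}^k (p - i + 1)` in a commutative ring. -/
def fall {R : Type*} [CommRing R] (p : R) (k : ℕ) : R :=
  ∏ i ∈ Finset.range k, (p - (i : R))

/-- `P` is a set partition of `{1,…,N}` (here `Fin N`) into `k` non-empty parts. -/
def IsPartitionInto {N : ℕ} (P : Finset (Finset (Fin N))) (k : ℕ) : Prop :=
  (∀ B ∈ P, B.Nonempty) ∧ (∀ B ∈ P, ∀ C ∈ P, B ≠ C → Disjoint B C) ∧
    P.sup id = Finset.univ ∧ P.card = k

instance {N : ℕ} (k : ℕ) : DecidablePred (fun P : Finset (Finset (Fin N)) => IsPartitionInto P k) :=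
  fun P => by unfold IsPartitionInto; infer_instance

namespace Stmt2Aux

theorem map_fall {R S : Type*} [CommRing R] [CommRing S] (φ : R →+* S) (p : R) (n : ℕ) :
    φ (fall p n) = fall (φ p) n := by
  simp [fall, map_prod]
open Finset

theorem fall_succ {R : Type*} [CommRing R] (p : R) (n : ℕ) :
    fall p (n + 1) = fall p n * (p - n) := by
  simp [fall, Finset.prod_range_succ]

theorem fall_succ' {R : Type*} [CommRing R] (p : R) (n : ℕ) :
    fall p (n + 1) = p * fall (p - 1) n := by
  rw [fall, Finset.prod_range_succ']
  simp only [Nat.cast_zero, sub_zero, fall]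
  rw [mul_comm]
  congr 1
  apply Finset.prod_congr rfl
  intro i _
  push_cast
  ring

variable {ι : Type*} [DecidableEq ι]

def g (x : ι → ℤ) (A : Finset ι) (u : ℤ) : ℤ :=
  if A.Nonempty then u * fall (u - 1 + ∑ m ∈ A, x m) (A.card - 1) else 1

theorem g_empty (x : ι → ℤ) (u : ℤ) : g x ∅ u = 1 := by simp [g]

theorem g_of_nonempty (x : ι → ℤ) {A : Finset ι} (h : A.Nonempty) (u : ℤ) :
    g x A u = u * fall (u - 1 + ∑ m ∈ A, x m) (A.card - 1) := by simp [g, h]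

theorem g_delta (x : ι → ℤ) (A : Finset ι) (u : ℤ) :
    g x A (u + 1) = g x A u + ∑ a ∈ A, g x (A.erase a) (u + x a) := by
  rcases A.eq_empty_or_nonempty with rfl | h
  · simp [g]
  obtain ⟨n, hn⟩ : ∃ n, A.card = n + 1 :=
    ⟨A.card - 1, (Nat.succ_pred_eq_of_pos h.card_pos).symm⟩
  cases n with
  | zero =>
    obtain ⟨a, rfl⟩ := Finset.card_eq_one.mp hn
    simp [g, fall]
  | succ m =>
    set S := ∑ m ∈ A, x m with hS
    have hterm : ∀ a ∈ A, g x (A.erase a) (u + x a)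
        = (u + x a) * fall (u - 1 + S) m := by
      intro a ha
      have hcard : (A.erase a).card = m + 1 := by
        rw [Finset.card_erase_of_mem ha, hn]
        omega
      have hne : (A.erase a).Nonempty := Finset.card_pos.mp (by omega)
      rw [g_of_nonempty x hne, hcard]
      have hsum : ∑ i ∈ A.erase a, x i = S - x a := by
        rw [hS, ← Finset.add_sum_erase A x ha]; ring
      rw [hsum]
      congr 2
      ring
    rw [Finset.sum_congr rfl hterm, ← Finset.sum_mul, Finset.sum_add_distrib,
      Finset.sum_const, hn, g_of_nonempty x h, g_of_nonempty x h, hn, ← hS]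
    simp only [Nat.add_sub_cancel]
    have h1 : fall (u + 1 - 1 + S) (m + 1) = (u + S) * fall (u - 1 + S) m := by
      rw [show u + 1 - 1 + S = u + S by ring, fall_succ']
      congr 2
      ring
    have h2 : fall (u - 1 + S) (m + 1) = fall (u - 1 + S) m * (u - 1 + S - m) := fall_succ _ _
    rw [h1, h2]
    push_cast
    ring


theorem g_zero (x : ι → ℤ) (A : Finset ι) : g x A 0 = if A = ∅ then 1 else 0 := by
  rcases A.eq_empty_or_nonempty with rfl | h
  · simp [g]
  · simp [g, h, h.ne_empty, fall]

def phi (x : ι → ℤ) (T : Finset ι) (a b : ℤ) : ℤ :=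
  (∑ A ∈ T.powerset, g x A a * g x (T \ A) b) - g x T (a + b)

theorem phi_zero (x : ι → ℤ) (T : Finset ι) (a : ℤ) : phi x T a 0 = 0 := by
  rw [phi, Finset.sum_eq_single_of_mem T (Finset.mem_powerset_self T)]
  · simp [g_empty]
  · intro A hA hne
    have hsub : A ⊆ T := Finset.mem_powerset.mp hA
    have hne' : (T \ A).Nonempty :=
      Finset.sdiff_nonempty.mpr fun hTA => hne (Finset.Subset.antisymm hsub hTA)
    rw [g_zero]
    simp [hne'.ne_empty]

theorem sdiff_eq_erase_sdiff_erase {T A : Finset ι} (hA : A ⊆ T) {c : ι} (hc : c ∈ A) :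
    T \ A = T.erase c \ A.erase c := by
  ext t
  simp only [Finset.mem_sdiff, Finset.mem_erase]
  constructor
  · rintro ⟨ht, hta⟩
    exact ⟨⟨fun h => hta (h ▸ hc), ht⟩, fun h => hta h.2⟩
  · rintro ⟨⟨htc, ht⟩, hta⟩
    exact ⟨ht, fun h => hta ⟨htc, h⟩⟩

theorem phi_step (x : ι → ℤ) (T : Finset ι)
    (ihc : ∀ c ∈ T, ∀ u v : ℤ,
      ∑ A ∈ (T.erase c).powerset, g x A u * g x (T.erase c \ A) v = g x (T.erase c) (u + v))
    (a b : ℤ) : phi x T (a + 1) b = phi x T a (b + 1) := by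
  rw [phi, phi, show a + 1 + b = a + (b + 1) by ring]
  have key : (∑ A ∈ T.powerset, g x A (a + 1) * g x (T \ A) b)
      = ∑ A ∈ T.powerset, g x A a * g x (T \ A) (b + 1) := by
    simp only [g_delta x, add_mul, mul_add, Finset.sum_add_distrib]
    congr 1
    have claim1 : (∑ A ∈ T.powerset, (∑ c ∈ A, g x (A.erase c) (a + x c)) * g x (T \ A) b)
        = ∑ c ∈ T, g x (T.erase c) (a + x c + b) := by
      calc (∑ A ∈ T.powerset, (∑ c ∈ A, g x (A.erase c) (a + x c)) * g x (T \ A) b)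
          = ∑ A ∈ T.powerset, ∑ c ∈ A, g x (A.erase c) (a + x c) * g x (T \ A) b :=
            Finset.sum_congr rfl fun A _ => Finset.sum_mul _ _ _
        _ = ∑ A ∈ T.powerset, ∑ c ∈ T,
              (if c ∈ A then g x (A.erase c) (a + x c) * g x (T \ A) b else 0) := by
            refine Finset.sum_congr rfl fun A hA => ?_
            rw [Finset.sum_ite_mem, Finset.inter_eq_right.mpr (Finset.mem_powerset.mp hA)]
        _ = ∑ c ∈ T, ∑ A ∈ T.powerset,
              (if c ∈ A then g x (A.erase c) (a + x c) * g x (T \ A) b else 0) :=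
            Finset.sum_comm
        _ = ∑ c ∈ T, ∑ A ∈ T.powerset.filter (fun A => c ∈ A),
              g x (A.erase c) (a + x c) * g x (T \ A) b :=
            Finset.sum_congr rfl fun c _ => (Finset.sum_filter _ _).symm
        _ = ∑ c ∈ T, ∑ B ∈ (T.erase c).powerset, g x B (a + x c) * g x (T.erase c \ B) b := by
            refine Finset.sum_congr rfl fun c hc => ?_
            refine Finset.sum_bij' (fun A _ => A.erase c) (fun B _ => insert c B)
              ?_ ?_ ?_ ?_ ?_
            · intro A hA
              rw [Finset.mem_filter, Finset.mem_powerset] at hA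
              exact Finset.mem_powerset.mpr (Finset.erase_subset_erase c hA.1)
            · intro B hB
              rw [Finset.mem_powerset] at hB
              rw [Finset.mem_filter, Finset.mem_powerset]
              exact ⟨Finset.insert_subset hc (hB.trans (Finset.erase_subset c T)),
                Finset.mem_insert_self c B⟩
            · intro A hA
              rw [Finset.mem_filter] at hA
              exact Finset.insert_erase hA.2
            · intro B hB
              rw [Finset.mem_powerset] at hB
              exact Finset.erase_insert fun hcB => (Finset.notMem_erase c T) (hB hcB)
            · intro A hA
              rw [Finset.mem_filter, Finset.mem_powerset] at hA
              rw [sdiff_eq_erase_sdiff_erase hA.1 hA.2]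
        _ = ∑ c ∈ T, g x (T.erase c) (a + x c + b) :=
            Finset.sum_congr rfl fun c hc => ihc c hc _ _
    have claim2 : (∑ A ∈ T.powerset, g x A a * ∑ c ∈ T \ A, g x ((T \ A).erase c) (b + x c))
        = ∑ c ∈ T, g x (T.erase c) (a + (b + x c)) := by
      calc (∑ A ∈ T.powerset, g x A a * ∑ c ∈ T \ A, g x ((T \ A).erase c) (b + x c))
          = ∑ A ∈ T.powerset, ∑ c ∈ T \ A, g x A a * g x ((T \ A).erase c) (b + x c) :=
            Finset.sum_congr rfl fun A _ => Finset.mul_sum _ _ _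
        _ = ∑ A ∈ T.powerset, ∑ c ∈ T,
              (if c ∈ T \ A then g x A a * g x ((T \ A).erase c) (b + x c) else 0) := by
            refine Finset.sum_congr rfl fun A _ => ?_
            rw [Finset.sum_ite_mem, Finset.inter_eq_right.mpr (Finset.sdiff_subset)]
        _ = ∑ c ∈ T, ∑ A ∈ T.powerset,
              (if c ∈ T \ A then g x A a * g x ((T \ A).erase c) (b + x c) else 0) :=
            Finset.sum_comm
        _ = ∑ c ∈ T, ∑ A ∈ T.powerset.filter (fun A => c ∈ T \ A),
              g x A a * g x ((T \ A).erase c) (b + x c) :=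
            Finset.sum_congr rfl fun c _ => (Finset.sum_filter _ _).symm
        _ = ∑ c ∈ T, ∑ A ∈ (T.erase c).powerset, g x A a * g x (T.erase c \ A) (b + x c) := by
            refine Finset.sum_congr rfl fun c hc => ?_
            have hfil : T.powerset.filter (fun A => c ∈ T \ A) = (T.erase c).powerset := by
              ext A
              simp only [Finset.mem_filter, Finset.mem_powerset, Finset.mem_sdiff,
                Finset.subset_erase]
              constructor
              · rintro ⟨h1, _, h3⟩; exact ⟨h1, h3⟩
              · rintro ⟨h1, h2⟩; exact ⟨h1, hc, h2⟩
            rw [hfil]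
            refine Finset.sum_congr rfl fun A hA => ?_
            rw [Finset.erase_sdiff_comm]
        _ = ∑ c ∈ T, g x (T.erase c) (a + (b + x c)) :=
            Finset.sum_congr rfl fun c hc => ihc c hc _ _
    rw [claim1, claim2]
    refine Finset.sum_congr rfl fun c _ => ?_
    ring_nf
  rw [key]

theorem conv (x : ι → ℤ) (T : Finset ι) : ∀ u v : ℤ,
    ∑ A ∈ T.powerset, g x A u * g x (T \ A) v = g x T (u + v) := by
  induction T using Finset.strongInduction with
  | _ T ih =>
    intro u v
    have ihc : ∀ c ∈ T, ∀ u v : ℤ,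
        ∑ A ∈ (T.erase c).powerset, g x A u * g x (T.erase c \ A) v
          = g x (T.erase c) (u + v) :=
      fun c hc => ih _ (Finset.erase_ssubset hc)
    have hstep := phi_step x T ihc
    have hP : ∀ n : ℕ, ∀ a b : ℤ, phi x T a (b + n) = phi x T (a + n) b := by
      intro n
      induction n with
      | zero => simp
      | succ m ihm =>
        intro a b
        have h1 : phi x T a (b + (m + 1 : ℕ)) = phi x T a ((b + 1) + m) := by
          push_cast; ring_nf
        have h2 : phi x T (a + m) (b + 1) = phi x T (a + (m + 1 : ℕ)) b := by
          rw [← hstep (a + m) b]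
          push_cast; ring_nf
        rw [h1, ihm a (b + 1), h2]
    have hphi : phi x T u v = 0 := by
      rcases Int.eq_nat_or_neg v with ⟨n, hn | hn⟩
      · subst hn
        have := hP n u 0
        rw [zero_add] at this
        rw [this, phi_zero]
      · subst hn
        have := hP n (u - n) (-(n : ℤ))
        rw [neg_add_cancel, show u - (n:ℤ) + n = u by ring] at this
        rw [← this, phi_zero]
    have := hphi
    rw [phi, sub_eq_zero] at this
    exact this


def parts (T : Finset ι) (m : ℕ) : Finset (Finset (Finset ι)) :=
  T.powerset.powerset.filter (fun P => (∀ B ∈ P, B.Nonempty) ∧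
    (∀ B ∈ P, ∀ C ∈ P, B ≠ C → Disjoint B C) ∧ P.sup id = T ∧ P.card = m)

theorem mem_parts {T : Finset ι} {m : ℕ} {P : Finset (Finset ι)} :
    P ∈ parts T m ↔ (∀ B ∈ P, B ⊆ T) ∧ (∀ B ∈ P, B.Nonempty) ∧
      (∀ B ∈ P, ∀ C ∈ P, B ≠ C → Disjoint B C) ∧ P.sup id = T ∧ P.card = m := by
  simp only [parts, Finset.mem_filter, Finset.mem_powerset, and_assoc]
  constructor
  · rintro ⟨h1, h⟩
    exact ⟨fun B hB => Finset.mem_powerset.mp (h1 hB), h⟩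
  · rintro ⟨h1, h⟩
    exact ⟨fun B hB => Finset.mem_powerset.mpr (h1 B hB), h⟩

def e (x : ι → ℤ) (ν : ℤ) (m : ℕ) (T : Finset ι) : ℤ :=
  ∑ P ∈ parts T m, ∏ B ∈ P, g x B ν

theorem e_zero (x : ι → ℤ) (ν : ℤ) (T : Finset ι) :
    e x ν 0 T = if T = ∅ then 1 else 0 := by
  have hparts : parts T 0 = if T = ∅ then {∅} else ∅ := by
    ext P
    simp only [parts, Finset.mem_filter, Finset.card_eq_zero]
    constructor
    · rintro ⟨-, -, -, hsup, rfl⟩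
      simp only [Finset.sup_empty] at hsup
      simp [← hsup]
    · intro hP
      split_ifs at hP with hT
      · simp only [Finset.mem_singleton] at hP
        subst hP; subst hT
        simp
      · simp at hP
  rw [e, hparts]
  split_ifs <;> simp

theorem insert_parts {T A : Finset ι} (hA : A ⊆ T) (hAne : A.Nonempty)
    {P : Finset (Finset ι)} {m : ℕ} (hP : P ∈ parts (T \ A) m) :
    A ∉ P ∧ insert A P ∈ parts T (m + 1) := by
  rw [mem_parts] at hP
  obtain ⟨hsub, hne, hdisj, hsup, hcard⟩ := hP
  have hAnotin : A ∉ P := by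
    intro hmem
    obtain ⟨a, ha⟩ := hAne
    have := hsub A hmem ha
    rw [Finset.mem_sdiff] at this
    exact this.2 ha
  refine ⟨hAnotin, mem_parts.mpr ⟨?_, ?_, ?_, ?_, ?_⟩⟩
  · intro B hB
    rcases Finset.mem_insert.mp hB with rfl | hB'
    · exact hA
    · exact (hsub B hB').trans (Finset.sdiff_subset)
  · intro B hB
    rcases Finset.mem_insert.mp hB with rfl | hB'
    · exact hAne
    · exact hne B hB'
  · have hd : ∀ C ⊆ T \ A, Disjoint A C := fun C hC =>
      Finset.disjoint_left.mpr fun a haA haC => ((Finset.mem_sdiff.mp (hC haC)).2) haA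
    intro B hB C hC hBC
    rcases Finset.mem_insert.mp hB with rfl | hB' <;>
      rcases Finset.mem_insert.mp hC with rfl | hC'
    · exact absurd rfl hBC
    · exact hd C (hsub C hC')
    · exact (hd B (hsub B hB')).symm
    · exact hdisj B hB' C hC' hBC
  · rw [Finset.sup_insert, hsup, id]
    exact Finset.union_sdiff_of_subset hA
  · rw [Finset.card_insert_of_notMem hAnotin, hcard]

theorem erase_parts {T : Finset ι} {P : Finset (Finset ι)} {m : ℕ}
    (hP : P ∈ parts T (m + 1)) {A : Finset ι} (hA : A ∈ P) :
    A ⊆ T ∧ A.Nonempty ∧ P.erase A ∈ parts (T \ A) m := by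
  rw [mem_parts] at hP
  obtain ⟨hsub, hne, hdisj, hsup, hcard⟩ := hP
  refine ⟨hsub A hA, hne A hA, mem_parts.mpr ⟨?_, ?_, ?_, ?_, ?_⟩⟩
  · intro B hB
    rw [Finset.mem_erase] at hB
    exact Finset.subset_sdiff.mpr ⟨hsub B hB.2, hdisj B hB.2 A hA hB.1⟩
  · exact fun B hB => hne B (Finset.mem_of_mem_erase hB)
  · exact fun B hB C hC => hdisj B (Finset.mem_of_mem_erase hB) C (Finset.mem_of_mem_erase hC)
  · refine le_antisymm (Finset.sup_le fun B hB => ?_) fun t ht => ?_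
    · rw [Finset.mem_erase] at hB
      exact Finset.subset_sdiff.mpr ⟨hsub B hB.2, hdisj B hB.2 A hA hB.1⟩
    · -- t ∈ T \ A → t ∈ sup
      rw [Finset.mem_sdiff] at ht
      have : t ∈ P.sup id := hsup ▸ ht.1
      rw [Finset.mem_sup] at this
      obtain ⟨B, hB, htB⟩ := this
      have hBA : B ≠ A := fun h => ht.2 (h ▸ htB)
      rw [Finset.mem_sup]
      exact ⟨B, Finset.mem_erase.mpr ⟨hBA, hB⟩, htB⟩
  · rw [Finset.card_erase_of_mem hA, hcard]
    omega

theorem mark (x : ι → ℤ) (ν : ℤ) (m : ℕ) (T : Finset ι) :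
    ∑ A ∈ T.powerset, g x A ν * e x ν m (T \ A)
      = e x ν m T + (m + 1 : ℤ) * e x ν (m + 1) T := by
  have h0 : (∅ : Finset ι) ∈ T.powerset := Finset.empty_mem_powerset T
  rw [← Finset.insert_erase h0, Finset.sum_insert (Finset.notMem_erase _ _),
    g_empty, Finset.sdiff_empty, one_mul]
  congr 1
  have hmain : ∑ A ∈ T.powerset.erase ∅, g x A ν * e x ν m (T \ A)
      = ∑ P ∈ parts T (m + 1), ∑ A ∈ P, ∏ B ∈ P, g x B ν := by
    simp only [e, Finset.mul_sum]
    rw [← Finset.sum_sigma (T.powerset.erase ∅) (fun A => parts (T \ A) m)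
        (fun p => g x p.1 ν * ∏ B ∈ p.2, g x B ν),
      ← Finset.sum_sigma (parts T (m + 1)) (fun P => P)
        (fun q => ∏ B ∈ q.1, g x B ν)]
    refine Finset.sum_bij' (fun p _ => ⟨insert p.1 p.2, p.1⟩)
      (fun q _ => ⟨q.2, q.1.erase q.2⟩) ?_ ?_ ?_ ?_ ?_
    · rintro ⟨A, P⟩ hp
      simp only [Finset.mem_sigma] at hp
      obtain ⟨hA, hP⟩ := hp
      rw [Finset.mem_erase, Finset.mem_powerset] at hA
      have h := insert_parts hA.2 (Finset.nonempty_of_ne_empty hA.1) hP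
      rw [Finset.mem_sigma]
      exact ⟨h.2, Finset.mem_insert_self _ _⟩
    · rintro ⟨P, A⟩ hq
      simp only [Finset.mem_sigma] at hq
      obtain ⟨hP, hA⟩ := hq
      have h := erase_parts hP hA
      rw [Finset.mem_sigma, Finset.mem_erase, Finset.mem_powerset]
      exact ⟨⟨h.2.1.ne_empty, h.1⟩, h.2.2⟩
    · rintro ⟨A, P⟩ hp
      simp only [Finset.mem_sigma] at hp
      obtain ⟨hA, hP⟩ := hp
      rw [Finset.mem_erase, Finset.mem_powerset] at hA
      have h := insert_parts hA.2 (Finset.nonempty_of_ne_empty hA.1) hP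
      exact Sigma.ext rfl (heq_of_eq (Finset.erase_insert h.1))
    · rintro ⟨P, A⟩ hq
      simp only [Finset.mem_sigma] at hq
      exact Sigma.ext (Finset.insert_erase hq.2) (by simp)
    · rintro ⟨A, P⟩ hp
      simp only [Finset.mem_sigma] at hp
      obtain ⟨hA, hP⟩ := hp
      rw [Finset.mem_erase, Finset.mem_powerset] at hA
      have h := insert_parts hA.2 (Finset.nonempty_of_ne_empty hA.1) hP
      dsimp only
      exact (Finset.prod_insert (f := fun B => g x B ν) h.1).symm
  rw [hmain]
  rw [e, Finset.mul_sum]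
  refine Finset.sum_congr rfl fun P hP => ?_
  rw [Finset.sum_const, (mem_parts.mp hP).2.2.2.2]
  push_cast
  ring


theorem desc_pascal (j m : ℕ) :
    (j + 1).descFactorial (m + 1) = j.descFactorial (m + 1) + (m + 1) * j.descFactorial m := by
  rcases le_or_gt m j with h | h
  · rw [Nat.succ_descFactorial_succ, Nat.descFactorial_succ, ← Nat.add_mul,
      show j - m + (m + 1) = j + 1 by omega]
  · rw [Nat.descFactorial_eq_zero_iff_lt.mpr h,
      Nat.descFactorial_eq_zero_iff_lt.mpr (by omega),
      Nat.descFactorial_eq_zero_iff_lt.mpr (by omega)]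
    ring

theorem g_mul (x : ι → ℤ) (ν : ℤ) : ∀ (j : ℕ) (T : Finset ι),
    g x T ((j : ℤ) * ν) = ∑ m ∈ Finset.range (j + 1), (j.descFactorial m : ℤ) * e x ν m T := by
  intro j
  induction j with
  | zero =>
    intro T
    simp [g_zero, e_zero]
  | succ j ih =>
    intro T
    have harg : ((j + 1 : ℕ) : ℤ) * ν = ν + (j : ℤ) * ν := by push_cast; ring
    rw [harg, ← conv x T ν ((j : ℤ) * ν)]
    have hinner : ∀ A ∈ T.powerset, g x A ν * g x (T \ A) ((j : ℤ) * ν)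
        = ∑ m ∈ Finset.range (j + 1), (j.descFactorial m : ℤ) * (g x A ν * e x ν m (T \ A)) := by
      intro A _
      rw [ih, Finset.mul_sum]
      exact Finset.sum_congr rfl fun m _ => by ring
    rw [Finset.sum_congr rfl hinner, Finset.sum_comm]
    have hswap : ∀ m ∈ Finset.range (j + 1),
        ∑ A ∈ T.powerset, (j.descFactorial m : ℤ) * (g x A ν * e x ν m (T \ A))
          = (j.descFactorial m : ℤ) * (e x ν m T + (m + 1 : ℤ) * e x ν (m + 1) T) := by
      intro m _
      rw [← Finset.mul_sum, mark]
    rw [Finset.sum_congr rfl hswap]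
    set S1 := ∑ m ∈ Finset.range (j + 1), (j.descFactorial m : ℤ) * e x ν m T with hS1
    set S2 := ∑ m ∈ Finset.range (j + 1),
      ((m : ℤ) + 1) * (j.descFactorial m : ℤ) * e x ν (m + 1) T with hS2
    have e1 : ∑ m ∈ Finset.range (j + 1),
        (j.descFactorial m : ℤ) * (e x ν m T + (m + 1 : ℤ) * e x ν (m + 1) T) = S1 + S2 := by
      rw [hS1, hS2, ← Finset.sum_add_distrib]
      exact Finset.sum_congr rfl fun m _ => by ring
    have e2 : ∑ m ∈ Finset.range (j + 2), (j.descFactorial m : ℤ) * e x ν m T = S1 := by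
      rw [Finset.sum_range_succ, Nat.descFactorial_eq_zero_iff_lt.mpr (by omega)]
      simp [hS1]
    have e3 : ∑ m ∈ Finset.range (j + 2),
        (m : ℤ) * (j.descFactorial (m - 1) : ℤ) * e x ν m T = S2 := by
      rw [Finset.sum_range_succ' (fun m => (m : ℤ) * (j.descFactorial (m - 1) : ℤ) * e x ν m T) (j + 1)]
      simp only [Nat.cast_zero, zero_mul, add_zero, Nat.add_sub_cancel]
      rw [hS2]
      refine Finset.sum_congr rfl fun m _ => ?_
      push_cast
      ring
    rw [e1, ← e2, ← e3, ← Finset.sum_add_distrib]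
    refine Finset.sum_congr rfl fun m _ => ?_
    rw [← add_mul]
    congr 1
    cases m with
    | zero => simp
    | succ i =>
      rw [desc_pascal]
      push_cast [Nat.add_sub_cancel]
      ring

theorem alt_sum (k m : ℕ) (hm : m ≤ k) :
    ∑ j ∈ Finset.range (k + 1), (-1 : ℤ) ^ (k - j) * (k.choose j : ℤ) * (j.descFactorial m : ℤ)
      = if m = k then (k.factorial : ℤ) else 0 := by
  rw [Finset.range_eq_Ico, ← Finset.sum_Ico_consecutive _ (Nat.zero_le m) (by omega : m ≤ k + 1)]
  have hfirst : ∑ j ∈ Finset.Ico 0 m, (-1 : ℤ) ^ (k - j) * (k.choose j : ℤ) * (j.descFactorial m : ℤ) = 0 := by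
    refine Finset.sum_eq_zero fun j hj => ?_
    rw [Finset.mem_Ico] at hj
    rw [Nat.descFactorial_eq_zero_iff_lt.mpr hj.2]
    simp
  rw [hfirst, zero_add, Finset.sum_Ico_eq_sum_range]
  rw [show k + 1 - m = (k - m) + 1 by omega]
  have hterm : ∀ t ∈ Finset.range ((k - m) + 1),
      (-1 : ℤ) ^ (k - (m + t)) * (k.choose (m + t) : ℤ) * ((m + t).descFactorial m : ℤ)
        = (k.descFactorial m : ℤ) * (-1 : ℤ) ^ (k - m) * ((-1 : ℤ) ^ t * ((k - m).choose t : ℤ)) := by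
    intro t ht
    rw [Finset.mem_range] at ht
    have htle : t ≤ k - m := by omega
    have hmtk : m + t ≤ k := by omega
    have hnat : k.choose (m + t) * (m + t).descFactorial m
        = k.descFactorial m * (k - m).choose t := by
      rw [Nat.descFactorial_eq_factorial_mul_choose, Nat.descFactorial_eq_factorial_mul_choose]
      rw [show k.choose (m + t) * (m.factorial * (m + t).choose m)
          = m.factorial * (k.choose (m + t) * (m + t).choose m) by ring]
      rw [Nat.choose_mul (n := k) (Nat.le_add_right m t), Nat.add_sub_cancel_left]
      ring
    have hsign : (-1 : ℤ) ^ (k - (m + t)) = (-1 : ℤ) ^ (k - m) * (-1 : ℤ) ^ t := by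
      have h1 : k - (m + t) + 2 * t = k - m + t := by omega
      calc (-1 : ℤ) ^ (k - (m + t)) = (-1 : ℤ) ^ (k - (m + t)) * (((-1 : ℤ) ^ 2) ^ t) := by
            norm_num
        _ = (-1 : ℤ) ^ (k - (m + t) + 2 * t) := by rw [← pow_mul, ← pow_add]
        _ = (-1 : ℤ) ^ (k - m + t) := by rw [h1]
        _ = (-1 : ℤ) ^ (k - m) * (-1 : ℤ) ^ t := pow_add _ _ _
    rw [hsign]
    have := congrArg (fun n : ℕ => (n : ℤ)) hnat
    push_cast at this ⊢
    linear_combination ((-1 : ℤ) ^ (k - m) * (-1 : ℤ) ^ t) * this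
  rw [Finset.sum_congr rfl hterm, ← Finset.mul_sum, Int.alternating_sum_range_choose]
  rcases eq_or_lt_of_le hm with rfl | hlt
  · simp [Nat.descFactorial_self]
  · rw [if_neg (by omega : ¬ k - m = 0), if_neg (by omega : ¬ m = k)]
    ring

theorem main_int (N k : ℕ) (hN : 1 ≤ N) (hk1 : 1 ≤ k) (ν : ℤ) (x : Fin N → ℤ) :
    ν * (k : ℤ) * (∑ r ∈ Finset.range k, (-1 : ℤ) ^ (k - 1 - r) * ((k - 1).choose r : ℤ) *
        fall (((r : ℤ) + 1) * ν - 1 + ∑ i, x i) (N - 1))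
    = ν * (k : ℤ) * (((k - 1).factorial : ℤ) * (ν ^ (k - 1) *
        ∑ P ∈ parts (Finset.univ : Finset (Fin N)) k,
          ∏ B ∈ P, fall (ν - 1 + ∑ m ∈ B, x m) (B.card - 1))) := by
  haveI : NeZero N := ⟨by omega⟩
  have huniv : (Finset.univ : Finset (Fin N)).Nonempty := Finset.univ_nonempty
  have hcard : (Finset.univ : Finset (Fin N)).card = N := by simp
  set Sx : ℤ := ∑ i, x i with hSx
  set F : ℕ → ℤ := fun j => (-1 : ℤ) ^ (k - j) * (k.choose j : ℤ) * g x Finset.univ ((j : ℤ) * ν)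
    with hF
  have hgj : ∀ j : ℕ, g x Finset.univ ((j : ℤ) * ν)
      = (j : ℤ) * ν * fall ((j : ℤ) * ν - 1 + Sx) (N - 1) := by
    intro j
    rw [g_of_nonempty x huniv, hcard]
  have step1 : ν * (k : ℤ) * (∑ r ∈ Finset.range k, (-1 : ℤ) ^ (k - 1 - r) * ((k - 1).choose r : ℤ) *
      fall (((r : ℤ) + 1) * ν - 1 + Sx) (N - 1)) = ∑ r ∈ Finset.range k, F (r + 1) := by
    rw [Finset.mul_sum]
    refine Finset.sum_congr rfl fun r _ => ?_
    simp only [hF]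
    have hchoose : (k : ℤ) * ((k - 1).choose r : ℤ) = ((r : ℤ) + 1) * (k.choose (r + 1) : ℤ) := by
      have h := Nat.add_one_mul_choose_eq (k - 1) r
      rw [show k - 1 + 1 = k by omega] at h
      have h2 := congrArg (fun n : ℕ => (n : ℤ)) h
      push_cast at h2
      linarith
    have hexp : k - 1 - r = k - (r + 1) := by omega
    rw [hgj (r + 1), hexp]
    push_cast
    linear_combination (ν * (-1 : ℤ) ^ (k - (r + 1)) * fall (((r : ℤ) + 1) * ν - 1 + Sx) (N - 1)) * hchoose
  have step2 : ∑ r ∈ Finset.range k, F (r + 1) = ∑ j ∈ Finset.range (k + 1), F j := by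
    rw [Finset.sum_range_succ' F k]
    have hF0 : F 0 = 0 := by
      simp only [hF, Nat.cast_zero, zero_mul, g_zero]
      rw [if_neg huniv.ne_empty]
      ring
    rw [hF0, add_zero]
  have step3 : ∑ j ∈ Finset.range (k + 1), F j
      = (k.factorial : ℤ) * e x ν k Finset.univ := by
    have hFj : ∀ j ∈ Finset.range (k + 1), F j = ∑ m ∈ Finset.range (k + 1),
        (-1 : ℤ) ^ (k - j) * (k.choose j : ℤ) * (j.descFactorial m : ℤ) * e x ν m Finset.univ := by
      intro j hj
      rw [Finset.mem_range] at hj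
      simp only [hF]
      rw [g_mul x ν j, Finset.mul_sum]
      rw [Finset.sum_subset (Finset.range_subset_range.mpr (by omega : j + 1 ≤ k + 1))]
      · exact Finset.sum_congr rfl fun m _ => by ring
      · intro m hm hm'
        rw [Finset.mem_range] at hm hm'
        rw [Nat.descFactorial_eq_zero_iff_lt.mpr (by omega)]
        simp
    rw [Finset.sum_congr rfl hFj, Finset.sum_comm]
    have hinner : ∀ m ∈ Finset.range (k + 1),
        ∑ j ∈ Finset.range (k + 1),
          (-1 : ℤ) ^ (k - j) * (k.choose j : ℤ) * (j.descFactorial m : ℤ) * e x ν m Finset.univ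
        = (if m = k then (k.factorial : ℤ) else 0) * e x ν m Finset.univ := by
      intro m hm
      rw [Finset.mem_range] at hm
      rw [← Finset.sum_mul, alt_sum k m (by omega)]
    rw [Finset.sum_congr rfl hinner]
    rw [Finset.sum_congr rfl (fun m _ => by
      show (if m = k then (k.factorial : ℤ) else 0) * e x ν m Finset.univ
        = if m = k then (k.factorial : ℤ) * e x ν m Finset.univ else 0
      split_ifs <;> ring)]
    rw [Finset.sum_ite_eq' (Finset.range (k + 1)) k
      (fun m => (k.factorial : ℤ) * e x ν m Finset.univ)]
    rw [if_pos (Finset.self_mem_range_succ k)]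
  have step4 : e x ν k Finset.univ = ν ^ k *
      ∑ P ∈ parts (Finset.univ : Finset (Fin N)) k,
        ∏ B ∈ P, fall (ν - 1 + ∑ m ∈ B, x m) (B.card - 1) := by
    rw [e, Finset.mul_sum]
    refine Finset.sum_congr rfl fun P hP => ?_
    obtain ⟨-, hne, -, -, hcardP⟩ := mem_parts.mp hP
    have : ∀ B ∈ P, g x B ν = ν * fall (ν - 1 + ∑ m ∈ B, x m) (B.card - 1) :=
      fun B hB => g_of_nonempty x (hne B hB) ν
    rw [Finset.prod_congr rfl this, Finset.prod_mul_distrib, Finset.prod_const, hcardP]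
  have hfact : (k : ℤ) * ((k - 1).factorial : ℤ) = (k.factorial : ℤ) := by
    exact_mod_cast congrArg (fun n : ℕ => (n : ℤ)) (Nat.mul_factorial_pred (by omega))
  have hpow : ν * ν ^ (k - 1) = ν ^ k := by
    rw [← pow_succ']
    congr 1
    omega
  rw [step1, step2, step3, step4]
  rw [show ν * (k : ℤ) * (((k - 1).factorial : ℤ) * (ν ^ (k - 1) * _)) =
    ((k : ℤ) * ((k - 1).factorial : ℤ)) * ((ν * ν ^ (k - 1)) *
      ∑ P ∈ parts (Finset.univ : Finset (Fin N)) k,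
        ∏ B ∈ P, fall (ν - 1 + ∑ m ∈ B, x m) (B.card - 1)) by ring, hfact, hpow]

theorem parts_univ (N k : ℕ) : parts (Finset.univ : Finset (Fin N)) k
    = Finset.univ.filter (fun P : Finset (Finset (Fin N)) => IsPartitionInto P k) := by
  ext P
  rw [Finset.mem_filter]
  simp only [mem_parts, Finset.mem_filter, Finset.mem_univ, true_and, IsPartitionInto]
  exact ⟨fun ⟨h1, h2, h3, h4, h5⟩ => ⟨h2, h3, h4, h5⟩,
    fun ⟨h2, h3, h4, h5⟩ => ⟨fun B _ => Finset.subset_univ B, h2, h3, h4, h5⟩⟩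

end Stmt2Aux

theorem stmt2 (N k : ℕ) (hN : 1 ≤ N) (hk1 : 1 ≤ k) (hkN : k ≤ N) :
    let ν : MvPolynomial (Fin (N + 1)) ℤ := MvPolynomial.X 0
    let x : Fin N → MvPolynomial (Fin (N + 1)) ℤ := fun i => MvPolynomial.X i.succ
    ∑ r ∈ Finset.range k,
        (-1 : MvPolynomial (Fin (N + 1)) ℤ) ^ (k - 1 - r) * ((k - 1).choose r : ℤ) •
          fall (((r : MvPolynomial (Fin (N + 1)) ℤ) + 1) * ν - 1 + ∑ i, x i) (N - 1)
      = ((k - 1).factorial : ℤ) • (ν ^ (k - 1) *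
          ∑ P ∈ Finset.univ.filter (fun P : Finset (Finset (Fin N)) => IsPartitionInto P k),
            ∏ B ∈ P, fall (ν - 1 + ∑ m ∈ B, x m) (B.card - 1)) := by
  intro ν x
  have hν : ν ≠ 0 := MvPolynomial.X_ne_zero 0
  have hk0 : ((k : MvPolynomial (Fin (N + 1)) ℤ)) ≠ 0 := Nat.cast_ne_zero.mpr (by omega)
  refine mul_left_cancel₀ (mul_ne_zero hν hk0) ?_
  apply MvPolynomial.funext
  intro f
  simp only [map_mul, map_sum, map_pow, map_add, map_sub, map_one, map_neg, map_natCast,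
    MvPolynomial.smul_eval, MvPolynomial.eval_X, Stmt2Aux.map_fall, map_prod, ν, x]
  have H := Stmt2Aux.main_int N k hN hk1 (f 0) (fun i => f i.succ)
  rw [Stmt2Aux.parts_univ] at H
  have hL : (∑ r ∈ Finset.range k, (-1 : ℤ) ^ (k - 1 - r) * (((k - 1).choose r : ℤ) *
      fall (((r : ℤ) + 1) * f 0 - 1 + ∑ i : Fin N, f i.succ) (N - 1)))
      = ∑ r ∈ Finset.range k, (-1 : ℤ) ^ (k - 1 - r) * ((k - 1).choose r : ℤ) *
      fall (((r : ℤ) + 1) * f 0 - 1 + ∑ i : Fin N, f i.succ) (N - 1) :=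
    Finset.sum_congr rfl fun r _ => (mul_assoc _ _ _).symm
  rw [hL]
  exact H
end

section
/- Let N ≥ r ≥ 0 be integers. In the polynomial ring ℤ[X,Y], [N ⊢ r]_{X+Y} = Σ_{i=0}^{N−r} X^{i} · C(r+i, i) · [N ⊢ r+i]_{Y}; that is, the coefficient of T^r in ∏_{j=1}^N (T + X + Y − j) ∈ (ℤ[X,Y])[T] equals Σ_{i=0}^{N−r} X^i · C(r+i, i) times the coefficient of T^{r+i} in ∏_{j=1}^N (T + Y − j). -/
theorem stmt7 (N r : ℕ) (hrN : r ≤ N) :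
    let X : MvPolynomial (Fin 2) ℤ := MvPolynomial.X 0
    let Y : MvPolynomial (Fin 2) ℤ := MvPolynomial.X 1
    (∏ j ∈ Finset.range N,
        (Polynomial.X + Polynomial.C (X + Y - ((j : MvPolynomial (Fin 2) ℤ) + 1)))).coeff r
      = ∑ i ∈ Finset.range (N - r + 1),
          X ^ i * ((r + i).choose i : ℤ) •
            (∏ j ∈ Finset.range N,
              (Polynomial.X + Polynomial.C (Y - ((j : MvPolynomial (Fin 2) ℤ) + 1)))).coeff (r + i) := by
  intro X Y
  set P : Polynomial (MvPolynomial (Fin 2) ℤ) :=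
    ∏ j ∈ Finset.range N,
      (Polynomial.X + Polynomial.C (Y - ((j : MvPolynomial (Fin 2) ℤ) + 1))) with hP
  have hcomp : (∏ j ∈ Finset.range N,
      (Polynomial.X + Polynomial.C (X + Y - ((j : MvPolynomial (Fin 2) ℤ) + 1))))
      = Polynomial.taylor X P := by
    rw [hP, Polynomial.taylor_apply, Polynomial.prod_comp]
    simp only [Polynomial.add_comp, Polynomial.X_comp, Polynomial.C_comp]
    refine Finset.prod_congr rfl fun j _ => ?_
    rw [add_assoc, ← map_add]
    ring_nf
  rw [hcomp, Polynomial.taylor_coeff]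
  have hdegP : P.natDegree ≤ N := by
    apply le_trans (Polynomial.natDegree_prod_le _ _)
    apply le_trans (Finset.sum_le_card_nsmul _ _ 1 ?_)
    · simp
    · intro j _
      exact Polynomial.natDegree_add_C.le.trans (by simp)
  have hdeg : (Polynomial.hasseDeriv r P).natDegree < N - r + 1 := by
    have := Polynomial.natDegree_hasseDeriv_le P r
    omega
  rw [Polynomial.eval_eq_sum_range' hdeg]
  refine Finset.sum_congr rfl fun i _ => ?_
  rw [Polynomial.hasseDeriv_coeff]
  have h1 : (i + r).choose r = (r + i).choose i := by
    rw [add_comm i r]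
    simpa using (Nat.choose_symm (Nat.le_add_right r i)).symm
  rw [h1, add_comm i r]
  rw [zsmul_eq_mul]
  push_cast
  ring
end

section
/- For every integer n ≥ 0, the following identity holds in the ring ℚ[[t]] of formal power series with rational coefficients: ( Σ_{k≥1} t^k / k )^{n} = n! · Σ_{k≥0} ( [k ⊢ n] / k! ) · t^{k}, where [k ⊢ n] is the unsigned Stirling number of the first kind. (Equivalently, (−ln(1−t))^n / n! = Σ_{k≥0} ([k ⊢ n]/k!) t^k.) -/
/-- The unsigned Stirling number of the first kind `[k ⊢ n]`: the coefficient of `Y^n`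
in the rising factorial `Y (Y+1) ⋯ (Y+k-1) ∈ ℤ[Y]`. -/
noncomputable def stirling1 (k n : ℕ) : ℤ :=
  (∏ i ∈ Finset.range k, (Polynomial.X + (Polynomial.C (i : ℤ)))).coeff n

open PowerSeries

noncomputable def L : ℚ⟦X⟧ := PowerSeries.mk fun k => if k = 0 then (0 : ℚ) else ((k : ℚ))⁻¹

lemma coeff_dL (k : ℕ) : coeff k (d⁄dX ℚ L) = 1 := by
  rw [PowerSeries.coeff_derivative, L, coeff_mk]
  simp [Nat.succ_ne_zero]
  field_simp

lemma one_sub_X_mul_dL : (1 - X) * d⁄dX ℚ L = 1 := by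
  ext k
  rw [sub_mul, one_mul, map_sub]
  cases k with
  | zero => simp [coeff_dL]
  | succ m => simp [coeff_dL, PowerSeries.coeff_succ_X_mul, coeff_dL]

lemma deriv_pow_eq (n : ℕ) : (1 - X) * d⁄dX ℚ (L ^ (n+1)) = ((n:ℚ)+1) • L ^ n := by
  rw [Derivation.leibniz_pow, Nat.add_sub_cancel, smul_eq_mul, mul_smul_comm,
    mul_left_comm, one_sub_X_mul_dL, mul_one,
    show ((n:ℚ)+1) = ((n+1:ℕ):ℚ) by push_cast; ring, Nat.cast_smul_eq_nsmul]

lemma rec_c (k n : ℕ) : ((k:ℚ)+1) * coeff (k+1) (L^(n+1)) =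
    (k:ℚ) * coeff k (L^(n+1)) + ((n:ℚ)+1) * coeff k (L^n) := by
  have h := congrArg (coeff k) (deriv_pow_eq n)
  rw [sub_mul, one_mul, map_sub, PowerSeries.coeff_derivative] at h
  rw [PowerSeries.coeff_smul, smul_eq_mul] at h
  cases k with
  | zero => simpa [mul_comm] using h
  | succ m =>
    rw [PowerSeries.coeff_succ_X_mul, PowerSeries.coeff_derivative] at h
    push_cast at h ⊢
    linarith [h]

lemma stirling1_zero (n : ℕ) : stirling1 0 n = if n = 0 then 1 else 0 := by
  simp [stirling1, Polynomial.coeff_one]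

lemma stirling1_succ (k n : ℕ) :
    stirling1 (k+1) (n+1) = stirling1 k n + (k:ℤ) * stirling1 k (n+1) := by
  unfold stirling1
  rw [Finset.prod_range_succ, mul_add, Polynomial.coeff_add, Polynomial.coeff_mul_X,
    Polynomial.coeff_mul_C]
  ring

lemma stirling1_succ_zero (k : ℕ) : stirling1 (k+1) 0 = 0 := by
  unfold stirling1
  rw [Polynomial.coeff_zero_eq_eval_zero, Polynomial.eval_prod]
  apply Finset.prod_eq_zero (Finset.mem_range.2 (Nat.succ_pos k))
  simp

lemma main_lemma (k n : ℕ) : (k.factorial : ℚ) * coeff k (L ^ n) =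
    (n.factorial : ℚ) * (stirling1 k n : ℚ) := by
  induction k generalizing n with
  | zero =>
    rw [PowerSeries.coeff_zero_eq_constantCoeff, map_pow]
    have : constantCoeff L = 0 := by simp [L]
    rw [this, stirling1_zero]
    cases n with
    | zero => simp
    | succ m => simp [Nat.factorial]
  | succ k ih =>
    cases n with
    | zero => simp [stirling1_succ_zero]
    | succ m =>
      have hrec := rec_c k m
      have h1 := ih (m+1)
      have h2 := ih m
      rw [stirling1_succ]
      have hk1 : ((k+1).factorial : ℚ) = ((k:ℚ)+1) * (k.factorial : ℚ) := by
        rw [Nat.factorial_succ]; push_cast; ring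
      have hm : ((m+1).factorial : ℚ) = ((m:ℚ)+1) * (m.factorial : ℚ) := by
        rw [Nat.factorial_succ]; push_cast; ring
      rw [hm] at h1
      rw [hk1, hm]
      push_cast
      linear_combination (k.factorial:ℚ) * hrec + (k:ℚ) * h1 + ((m:ℚ)+1) * h2

theorem stmt8 (n : ℕ) :
    (PowerSeries.mk fun k => if k = 0 then (0 : ℚ) else ((k : ℚ))⁻¹) ^ n
      = (n.factorial : ℚ) • PowerSeries.mk (fun k => (stirling1 k n : ℚ) / (k.factorial : ℚ)) := by
  have hL : (PowerSeries.mk fun k => if k = 0 then (0 : ℚ) else ((k : ℚ))⁻¹) = L := rfl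
  rw [hL]
  ext k
  rw [PowerSeries.coeff_smul, coeff_mk, smul_eq_mul]
  have h := main_lemma k n
  have hk : (k.factorial : ℚ) ≠ 0 := Nat.cast_ne_zero.2 k.factorial_ne_zero
  rw [← mul_div_assoc, eq_div_iff hk]
  linarith [h]
end
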